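/- arXiv:2201.08596 — 2 statements merged into one kernel-verified Lean document; each statement's English description precedes it below -/
import Mathlib

section
/- Let G be a connected signed digraph. There exists a nilpotent degree-bounded system on G if and only if G is not a signed cycle. -/
open scoped Classical

/-- A signed digraph on vertex set `V`: for each ordered pair of vertices there may be
a positive arc and/or a negative arc. -/
structure SDigraph (V : Type) where
  pos : V → V → Bool
  neg : V → V → Bool

namespace SDigraph

variable {V : Type}

/-- There is an arc (of some sign) from `a` to `b` (the underlying unsigned digraph). -/
def arc (G : SDigraph V) (a b : V) : Prop := G.pos a b = true ∨ G.neg a b = true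

/-- Out-degree: positive and negative arcs are counted separately. -/
def outdeg [Fintype V] (G : SDigraph V) (i : V) : ℕ :=
  (Finset.univ.filter fun j => G.pos i j = true).card +
  (Finset.univ.filter fun j => G.neg i j = true).card

/-- In-degree: positive and negative arcs are counted separately. -/
def indeg [Fintype V] (G : SDigraph V) (i : V) : ℕ :=
  (Finset.univ.filter fun j => G.pos j i = true).card +
  (Finset.univ.filter fun j => G.neg j i = true).card

/-- The symmetrized adjacency relation (for weak connectivity). -/
def wconnRel (G : SDigraph V) (a b : V) : Prop := G.arc a b ∨ G.arc b a

/-- `G` is (weakly) connected. -/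
def Connected (G : SDigraph V) : Prop :=
  ∀ a b : V, Relation.ReflTransGen (wconnRel G) a b

/-- Directed reachability. -/
def Reach (G : SDigraph V) : V → V → Prop := Relation.ReflTransGen G.arc

/-- Out-degree in the underlying unsigned digraph. -/
noncomputable def underOutdeg [Fintype V] (G : SDigraph V) (i : V) : ℕ :=
  (Finset.univ.filter fun j => G.arc i j).card

/-- In-degree in the underlying unsigned digraph. -/
noncomputable def underIndeg [Fintype V] (G : SDigraph V) (i : V) : ℕ :=
  (Finset.univ.filter fun j => G.arc j i).card

/-- `G` is a signed cycle: the underlying digraph is a directed cycle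
(every vertex has exactly one out- and one in-neighbour and the graph is connected
and nonempty) and there are no parallel arcs. -/
def IsSignedCycleGraph [Fintype V] (G : SDigraph V) : Prop :=
  0 < Fintype.card V ∧ Connected G ∧
  (∀ a b : V, ¬(G.pos a b = true ∧ G.neg a b = true)) ∧
  (∀ i : V, underOutdeg G i = 1) ∧
  (∀ i : V, underIndeg G i = 1)

/-- `steps G m a b`: there is a directed walk of length `m` from `a` to `b`. -/
def steps (G : SDigraph V) : ℕ → V → V → Prop
  | 0 => fun a b => a = b
  | m + 1 => fun a b => ∃ c, G.arc a c ∧ steps G m c b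

/-- Directed distance from `a` to `b`, `⊤` if `b` is not reachable from `a`. -/
noncomputable def dist (G : SDigraph V) (a b : V) : ℕ∞ :=
  sInf {x : ℕ∞ | ∃ m : ℕ, steps G m a b ∧ x = (m : ℕ∞)}

/-- The strong component containing `a`, as a finite set of vertices. -/
noncomputable def scc [Fintype V] (G : SDigraph V) (a : V) : Finset V :=
  Finset.univ.filter fun b => Reach G a b ∧ Reach G b a

/-- The strong component of `a` is initial: no arc enters it from outside. -/
def Initial [Fintype V] (G : SDigraph V) (a : V) : Prop :=
  ∀ b c : V, b ∈ scc G a → G.arc c b → c ∈ scc G a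

/-- `λ(G) = max_i min_{initial strong component I} (d_G(I,i) + |I|)`. -/
noncomputable def lam [Fintype V] (G : SDigraph V) : ℕ∞ :=
  Finset.univ.sup fun i : V =>
    (Finset.univ.filter fun a : V => Initial G a).inf fun a =>
      (scc G a).inf (fun b => dist G b i) + ((scc G a).card : ℕ∞)

/-- `G` is basic: all its initial strong components are trivial
(a single vertex with no loop). -/
def Basic [Fintype V] (G : SDigraph V) : Prop :=
  ∀ a : V, Initial G a → (scc G a).card = 1 ∧ ¬ G.arc a a

/-- The (weakly) connected component containing `a`. -/
noncomputable def component [Fintype V] (G : SDigraph V) (a : V) : Finset V :=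
  Finset.univ.filter fun b => Relation.ReflTransGen (wconnRel G) a b

/-- The subgraph induced by a set `S` of vertices. -/
def induce (G : SDigraph V) (S : Finset V) : SDigraph {x : V // x ∈ S} :=
  ⟨fun a b => G.pos a.1 b.1, fun a b => G.neg a.1 b.1⟩

/-- `v` (with arc signs `s`) is a directed cycle of `G` on `m+1` distinct vertices:
for each `t` there is an arc of sign `s t` from `v t` to `v (t+1)` (cyclically). -/
def IsSignedCycleOn (G : SDigraph V) (m : ℕ)
    (v : Fin (m + 1) → V) (s : Fin (m + 1) → Bool) : Prop :=
  Function.Injective v ∧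
  ∀ t : Fin (m + 1),
    if s t then G.pos (v t) (v (t + 1)) = true else G.neg (v t) (v (t + 1)) = true

/-- `G` has a directed cycle (signs ignored). -/
def HasCycle (G : SDigraph V) : Prop :=
  ∃ (m : ℕ) (v : Fin (m + 1) → V), Function.Injective v ∧
    ∀ t : Fin (m + 1), G.arc (v t) (v (t + 1))

/-- Number of negative arcs in a sign pattern. -/
def negCount {m : ℕ} (s : Fin (m + 1) → Bool) : ℕ :=
  (Finset.univ.filter fun t => s t = false).card

/-- `G` has a positive cycle. -/
def HasPositiveCycle (G : SDigraph V) : Prop :=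
  ∃ (m : ℕ) (v : Fin (m + 1) → V) (s : Fin (m + 1) → Bool),
    IsSignedCycleOn G m v s ∧ negCount s % 2 = 0

/-- `G` has a negative cycle. -/
def HasNegativeCycle (G : SDigraph V) : Prop :=
  ∃ (m : ℕ) (v : Fin (m + 1) → V) (s : Fin (m + 1) → Bool),
    IsSignedCycleOn G m v s ∧ negCount s % 2 = 1

end SDigraph

/-- A finite dynamical system with components indexed by `V`: each `X i` is a
nonempty finite interval of integers and `f` maps `X = ∏ X i` into itself. -/
structure FDS (V : Type) where
  X : V → Finset ℤ
  nonempty : ∀ i, (X i).Nonempty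
  interval : ∀ i, ∀ a ∈ X i, ∀ b ∈ X i, ∀ c : ℤ, a ≤ c → c ≤ b → c ∈ X i
  f : (V → ℤ) → V → ℤ
  maps : ∀ x, (∀ i, x i ∈ X i) → ∀ i, f x i ∈ X i

namespace FDS

variable {V : Type}

/-- `x` is a state of the system, i.e. `x ∈ X`. -/
def mem (F : FDS V) (x : V → ℤ) : Prop := ∀ i, x i ∈ F.X i

/-- `G` is the interaction graph of `F`: there is a positive (negative) arc from
`j` to `i` iff increasing `x j` by one can strictly increase (decrease) `f _ i`. -/
def onGraph [DecidableEq V] (F : FDS V) (G : SDigraph V) : Prop :=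
  (∀ j i, G.pos j i = true ↔ ∃ x, F.mem x ∧ x j + 1 ∈ F.X j ∧
      F.f x i < F.f (Function.update x j (x j + 1)) i) ∧
  (∀ j i, G.neg j i = true ↔ ∃ x, F.mem x ∧ x j + 1 ∈ F.X j ∧
      F.f (Function.update x j (x j + 1)) i < F.f x i)

/-- `F` is degree-bounded with respect to `G`. -/
def degreeBounded [Fintype V] (F : FDS V) (G : SDigraph V) : Prop :=
  ∀ i, (G.outdeg i = 0 ∧ 0 < G.indeg i → (F.X i).card = 2) ∧
    (¬(G.outdeg i = 0 ∧ 0 < G.indeg i) → (F.X i).card ≤ G.outdeg i + 1)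

/-- Fixed points of `F`. -/
def IsFixed (F : FDS V) (x : V → ℤ) : Prop := F.mem x ∧ F.f x = x

/-- `F` is nilpotent: some iterate is constant on `X`. -/
def Nilpotent (F : FDS V) : Prop :=
  ∃ k : ℕ, 1 ≤ k ∧ ∃ c, ∀ x, F.mem x → F.f^[k] x = c

/-- `F` converges toward `H` in `k` steps:
`f^k(X) ⊆ h(Y) ⊆ Y ⊆ X` and `f = h` on `Y`. -/
def ConvergesToward (F H : FDS V) (k : ℕ) : Prop :=
  (∀ i, H.X i ⊆ F.X i) ∧
  (∀ x, F.mem x → ∃ y, H.mem y ∧ F.f^[k] x = H.f y) ∧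
  (∀ x, H.mem x → F.f x = H.f x)

end FDS

namespace Converse
open SDigraph Finset

variable {n : ℕ}

lemma filter_arc_in (G : SDigraph (Fin n)) (i : Fin n) :
    (Finset.univ.filter fun j => G.arc j i) =
      (Finset.univ.filter fun j => G.pos j i = true) ∪
      (Finset.univ.filter fun j => G.neg j i = true) := by
  ext k; rw [Finset.mem_union, Finset.mem_filter, Finset.mem_filter, Finset.mem_filter]; simp [SDigraph.arc]

lemma filter_arc_out (G : SDigraph (Fin n)) (i : Fin n) :
    (Finset.univ.filter fun j => G.arc i j) =
      (Finset.univ.filter fun j => G.pos i j = true) ∪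
      (Finset.univ.filter fun j => G.neg i j = true) := by
  ext k; rw [Finset.mem_union, Finset.mem_filter, Finset.mem_filter, Finset.mem_filter]; simp [SDigraph.arc]

lemma filter_arc_card_le (G : SDigraph (Fin n)) (i : Fin n) :
    (Finset.univ.filter fun j => G.arc j i).card ≤ G.indeg i := by
  unfold SDigraph.indeg
  rw [filter_arc_in]
  exact Finset.card_union_le _ _

lemma outdeg_eq_under (G : SDigraph (Fin n))
    (h : ∀ a b : Fin n, ¬(G.pos a b = true ∧ G.neg a b = true)) (a : Fin n) :
    G.outdeg a = G.underOutdeg a := by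
  unfold SDigraph.outdeg SDigraph.underOutdeg
  rw [filter_arc_out, Finset.card_union_of_disjoint]
  rw [Finset.disjoint_left]
  intro b hb hb'
  simp only [Finset.mem_filter] at hb hb'
  exact h a b ⟨hb.2, hb'.2⟩

lemma indeg_eq_under (G : SDigraph (Fin n))
    (h : ∀ a b : Fin n, ¬(G.pos a b = true ∧ G.neg a b = true)) (a : Fin n) :
    G.indeg a = G.underIndeg a := by
  unfold SDigraph.indeg SDigraph.underIndeg
  rw [filter_arc_in, Finset.card_union_of_disjoint]
  rw [Finset.disjoint_left]
  intro b hb hb'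
  simp only [Finset.mem_filter] at hb hb'
  exact h b a ⟨hb.2, hb'.2⟩

lemma cycle_not_nilpotent (G : SDigraph (Fin n)) (hc : G.IsSignedCycleGraph)
    (F : FDS (Fin n)) (hog : F.onGraph G) (hdb : F.degreeBounded G) : ¬ F.Nilpotent := by
  obtain ⟨hcard, hconn, hpar, hout, hind⟩ := hc
  have hout1 : ∀ i, G.outdeg i = 1 := fun i => by rw [outdeg_eq_under G hpar]; exact hout i
  have hin1 : ∀ i, G.indeg i = 1 := fun i => by rw [indeg_eq_under G hpar]; exact hind i
  -- unique in-neighbour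
  have hin_uniq : ∀ i j j' : Fin n, G.arc j i → G.arc j' i → j = j' := by
    intro i j j' hj hj'
    by_contra hne
    have h2 : 2 ≤ (Finset.univ.filter fun k => G.arc k i).card :=
      Finset.one_lt_card.mpr ⟨j, by simp [hj], j', by simp [hj'], hne⟩
    have h3 := filter_arc_card_le G i
    have h4 := hin1 i
    omega
  -- existence of out-neighbour and in-neighbour
  have hex_out : ∀ i, ∃ z, G.arc i z := by
    intro i
    have h1 := hout i
    have : (Finset.univ.filter fun j => G.arc i j).Nonempty := by
      rw [← Finset.card_pos]; unfold SDigraph.underOutdeg at h1; omega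
    obtain ⟨z, hz⟩ := this
    exact ⟨z, (Finset.mem_filter.mp hz).2⟩
  have hex_in : ∀ i, ∃ z, G.arc z i := by
    intro i
    have h1 := hind i
    have : (Finset.univ.filter fun j => G.arc j i).Nonempty := by
      rw [← Finset.card_pos]; unfold SDigraph.underIndeg at h1; omega
    obtain ⟨z, hz⟩ := this
    exact ⟨z, (Finset.mem_filter.mp hz).2⟩
  -- each X i has exactly two elements, of the form {a, a+1}
  have hcard2 : ∀ i, (F.X i).card = 2 := by
    intro i
    have hb := (hdb i).2 (by rw [hout1 i]; simp)
    rw [hout1 i] at hb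
    rcases Nat.lt_or_ge (F.X i).card 2 with h | h
    · exfalso
      have h1 : (F.X i).card = 1 := by
        have := Finset.card_pos.mpr (F.nonempty i); omega
      obtain ⟨v, hv⟩ := Finset.card_eq_one.mp h1
      obtain ⟨z, hz⟩ := hex_out i
      have hwit : ∃ x, F.mem x ∧ x i + 1 ∈ F.X i ∧ True := by
        rcases hz with hp | hn
        · obtain ⟨x, hx1, hx2, _⟩ := (hog.1 i z).mp hp; exact ⟨x, hx1, hx2, trivial⟩
        · obtain ⟨x, hx1, hx2, _⟩ := (hog.2 i z).mp hn; exact ⟨x, hx1, hx2, trivial⟩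
      obtain ⟨x, hx1, hx2, _⟩ := hwit
      have h5 : x i ∈ F.X i := hx1 i
      rw [hv] at h5 hx2
      simp at h5 hx2
      omega
    · omega
  have hX : ∀ i, ∃ a : ℤ, F.X i = {a, a + 1} := by
    intro i
    obtain ⟨a, b, hab, hXi⟩ := Finset.card_eq_two.mp (hcard2 i)
    rcases lt_or_gt_of_ne hab with h | h
    · refine ⟨a, ?_⟩
      have hmem : a + 1 ∈ F.X i := by
        apply F.interval i a (by rw [hXi]; simp) b (by rw [hXi]; simp) <;> omega
      rw [hXi] at hmem ⊢
      rcases Finset.mem_insert.mp hmem with h1 | h1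
      · omega
      · rw [← Finset.mem_singleton.mp h1]
    · refine ⟨b, ?_⟩
      have hmem : b + 1 ∈ F.X i := by
        apply F.interval i b (by rw [hXi]; simp) a (by rw [hXi]; simp) <;> omega
      rw [hXi] at hmem ⊢
      rcases Finset.mem_insert.mp hmem with h1 | h1
      · rw [← h1]; exact Finset.pair_comm _ b
      · exact absurd (Finset.mem_singleton.mp h1) (by omega)
  classical
  set lo : Fin n → ℤ := fun i => Classical.choose (hX i) with hlo
  have hXeq : ∀ i, F.X i = {lo i, lo i + 1} := fun i => Classical.choose_spec (hX i)
  have hmemlo : ∀ i, lo i ∈ F.X i := fun i => by rw [hXeq i]; simp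
  have hmemhi : ∀ i, lo i + 1 ∈ F.X i := fun i => by rw [hXeq i]; simp
  have hmem2 : ∀ i v, v ∈ F.X i → v = lo i ∨ v = lo i + 1 := fun i v hv => by
    rw [hXeq i] at hv; simpa using hv
  set par : Fin n → Fin n := fun i => Classical.choose (hex_in i) with hparq
  have hpar_arc : ∀ i, G.arc (par i) i := fun i => Classical.choose_spec (hex_in i)
  have hpar_eq : ∀ i j, G.arc j i → j = par i := fun i j hj =>
    hin_uniq i j (par i) hj (hpar_arc i)
  have hupd_mem : ∀ (x : Fin n → ℤ) j v, F.mem x → v ∈ F.X j →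
      F.mem (Function.update x j v) := by
    intro x j v hx hv i
    by_cases h : i = j
    · subst h; simpa using hv
    · rw [Function.update_of_ne h]; exact hx i
  have hindep : ∀ j i (x : Fin n → ℤ), F.mem x → x j + 1 ∈ F.X j → ¬ G.arc j i →
      F.f (Function.update x j (x j + 1)) i = F.f x i := by
    intro j i x hx hx1 hno
    have hp : ¬ (G.pos j i = true) := fun hh => hno (Or.inl hh)
    have hn : ¬ (G.neg j i = true) := fun hh => hno (Or.inr hh)
    rw [hog.1 j i] at hp; rw [hog.2 j i] at hn
    push_neg at hp hn
    have h1 := hp x hx hx1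
    have h2 := hn x hx hx1
    omega
  have hcrawl : ∀ i (m : ℕ) (x y : Fin n → ℤ), F.mem x → F.mem y →
      (Finset.univ.filter fun k => x k ≠ y k).card ≤ m → x (par i) = y (par i) →
      F.f x i = F.f y i := by
    intro i m
    induction m with
    | zero =>
      intro x y hx hy hcd hagree
      have hxy : x = y := by
        funext w
        by_contra hw
        have hmemw : w ∈ Finset.univ.filter fun k => x k ≠ y k := by simp [hw]
        have := Finset.card_pos.mpr ⟨w, hmemw⟩
        omega
      rw [hxy]
    | succ m ih =>
      intro x y hx hy hcd hagree
      by_cases hxy : x = y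
      · rw [hxy]
      · have hk : ∃ k, x k ≠ y k := by
          by_contra h; push_neg at h; exact hxy (funext h)
        obtain ⟨k, hk⟩ := hk
        have hkp : k ≠ par i := by
          intro h; rw [h] at hk; exact hk hagree
        have hnoarc : ¬ G.arc k i := fun h => hkp (hpar_eq i k h)
        have hkmem : k ∈ Finset.univ.filter fun w => x w ≠ y w := by simp [hk]
        have hcd' := Finset.card_erase_of_mem hkmem
        rcases hmem2 k _ (hx k) with h1 | h1 <;> rcases hmem2 k _ (hy k) with h2 | h2
        · exact absurd (h1.trans h2.symm) hk
        · -- x k = lo k, y k = lo k + 1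
          have hx1 : x k + 1 ∈ F.X k := by rw [h1]; exact hmemhi k
          have hx'm : F.mem (Function.update x k (x k + 1)) := hupd_mem x k _ hx hx1
          have heq1 := hindep k i x hx hx1 hnoarc
          have hsub : (Finset.univ.filter fun w => Function.update x k (x k + 1) w ≠ y w) ⊆
              (Finset.univ.filter fun w => x w ≠ y w).erase k := by
            intro w hw
            simp only [Finset.mem_filter, Finset.mem_univ, true_and] at hw
            by_cases hwk : w = k
            · exfalso; apply hw; rw [hwk, Function.update_self, h1, h2]
            · rw [Finset.mem_erase]
              refine ⟨hwk, by simp [Function.update_of_ne hwk] at hw; simp [hw]⟩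
          have hcard2' : (Finset.univ.filter fun w =>
              Function.update x k (x k + 1) w ≠ y w).card ≤ m := by
            have := Finset.card_le_card hsub
            omega
          have hagree' : Function.update x k (x k + 1) (par i) = y (par i) := by
            rw [Function.update_of_ne (fun h => hkp h.symm)]; exact hagree
          rw [← heq1]
          exact ih _ y hx'm hy hcard2' hagree'
        · -- x k = lo k + 1, y k = lo k
          have hy1 : y k + 1 ∈ F.X k := by rw [h2]; exact hmemhi k
          have hy'm : F.mem (Function.update y k (y k + 1)) := hupd_mem y k _ hy hy1
          have heq1 := hindep k i y hy hy1 hnoarc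
          have hsub : (Finset.univ.filter fun w => x w ≠ Function.update y k (y k + 1) w) ⊆
              (Finset.univ.filter fun w => x w ≠ y w).erase k := by
            intro w hw
            simp only [Finset.mem_filter, Finset.mem_univ, true_and] at hw
            by_cases hwk : w = k
            · exfalso; apply hw; rw [hwk, Function.update_self, h1, h2]
            · rw [Finset.mem_erase]
              refine ⟨hwk, by simp [Function.update_of_ne hwk] at hw; simp [hw]⟩
          have hcard2' : (Finset.univ.filter fun w =>
              x w ≠ Function.update y k (y k + 1) w).card ≤ m := by
            have := Finset.card_le_card hsub
            omega
          have hagree' : x (par i) = Function.update y k (y k + 1) (par i) := by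
            rw [Function.update_of_ne (fun h => hkp h.symm)]; exact hagree
          rw [← heq1]
          exact ih x _ hx hy'm hcard2' hagree'
        · exact absurd (h1.trans h2.symm) hk
  -- canonical states
  set canon : Fin n → ℤ → (Fin n → ℤ) := fun i v w => if w = par i then v else lo w
    with hcanonq
  have hcanon_mem : ∀ i v, v ∈ F.X (par i) → F.mem (canon i v) := by
    intro i v hv w
    by_cases h : w = par i
    · simp only [hcanonq, h, if_pos rfl]; exact hv
    · simp only [hcanonq, if_neg h]; exact hmemlo w
  have hcanon_par : ∀ i v, canon i v (par i) = v := by intro i v; simp [hcanonq]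
  have hg : ∀ i (x : Fin n → ℤ), F.mem x → F.f x i = F.f (canon i (x (par i))) i := by
    intro i x hx
    apply hcrawl i n x _ hx (hcanon_mem i _ (hx (par i)))
    · calc (Finset.univ.filter fun k => x k ≠ canon i (x (par i)) k).card
          ≤ Finset.univ.card := Finset.card_filter_le _ _
        _ = n := by simp
    · rw [hcanon_par]
  have hgi : ∀ i, F.f (canon i (lo (par i))) i ≠ F.f (canon i (lo (par i) + 1)) i := by
    intro i
    have hstep : ∀ (x : Fin n → ℤ), F.mem x → x (par i) + 1 ∈ F.X (par i) →
        F.f x i = F.f (canon i (lo (par i))) i ∧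
        F.f (Function.update x (par i) (x (par i) + 1)) i =
          F.f (canon i (lo (par i) + 1)) i := by
      intro x hx hx1
      have hxp : x (par i) = lo (par i) := by
        rcases hmem2 _ _ (hx (par i)) with h | h
        · exact h
        · exfalso
          rcases hmem2 _ _ hx1 with h' | h' <;> omega
      constructor
      · rw [hg i x hx, hxp]
      · have hm : F.mem (Function.update x (par i) (x (par i) + 1)) :=
          hupd_mem x _ _ hx hx1
        rw [hg i _ hm]
        congr 2
        rw [Function.update_self, hxp]
    rcases hpar_arc i with hp | hn
    · obtain ⟨x, hx, hx1, hlt⟩ := (hog.1 _ i).mp hp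
      obtain ⟨e1, e2⟩ := hstep x hx hx1
      rw [e1, e2] at hlt
      exact ne_of_lt hlt
    · obtain ⟨x, hx, hx1, hlt⟩ := (hog.2 _ i).mp hn
      obtain ⟨e1, e2⟩ := hstep x hx hx1
      rw [e1, e2] at hlt
      exact (ne_of_lt hlt).symm
  have hinj : ∀ (x y : Fin n → ℤ), F.mem x → F.mem y → x ≠ y → F.f x ≠ F.f y := by
    intro x y hx hy hne heq
    have hk : ∃ k, x k ≠ y k := by
      by_contra h; push_neg at h; exact hne (funext h)
    obtain ⟨k, hk⟩ := hk
    obtain ⟨z, hz⟩ := hex_out k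
    have hkz : k = par z := hpar_eq z k hz
    have e1 : F.f x z = F.f (canon z (x (par z))) z := hg z x hx
    have e2 : F.f y z = F.f (canon z (y (par z))) z := hg z y hy
    have hfz : F.f x z = F.f y z := by rw [heq]
    rw [e1, e2] at hfz
    rw [hkz] at hk
    rcases hmem2 _ _ (hx (par z)) with h1 | h1 <;> rcases hmem2 _ _ (hy (par z)) with h2 | h2
    · exact hk (h1.trans h2.symm)
    · rw [h1, h2] at hfz; rw [← hkz] at hfz; rw [hkz] at hfz; exact hgi z hfz
    · rw [h1, h2] at hfz; exact hgi z hfz.symm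
    · exact hk (h1.trans h2.symm)
  rintro ⟨k, hk1, c, hc⟩
  have hn0 : 0 < n := by simpa using hcard
  set v0 : Fin n := ⟨0, hn0⟩
  set x0 : Fin n → ℤ := fun i => lo i with hx0q
  set x1 : Fin n → ℤ := Function.update x0 v0 (lo v0 + 1) with hx1q
  have hx0m : F.mem x0 := fun i => hmemlo i
  have hx1m : F.mem x1 := hupd_mem x0 v0 _ hx0m (hmemhi v0)
  have hne01 : x0 ≠ x1 := by
    intro h
    have := congrFun h v0
    simp only [hx1q, Function.update_self, hx0q] at this
    omega
  have hiter : ∀ t, F.mem (F.f^[t] x0) ∧ F.mem (F.f^[t] x1) ∧ F.f^[t] x0 ≠ F.f^[t] x1 := by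
    intro t
    induction t with
    | zero => exact ⟨hx0m, hx1m, hne01⟩
    | succ t ih =>
      simp only [Function.iterate_succ_apply']
      exact ⟨F.maps _ ih.1, F.maps _ ih.2.1, hinj _ _ ih.1 ih.2.1 ih.2.2⟩
  have := (hiter k).2.2
  rw [hc x0 hx0m, hc x1 hx1m] at this
  exact this rfl

end Converse
namespace Fwd
open SDigraph Finset Function

variable {n : ℕ}

/-- parallel (double) arc -/
def dbl (G : SDigraph (Fin n)) (j i : Fin n) : Prop := G.pos j i = true ∧ G.neg j i = true

def hasDbl (G : SDigraph (Fin n)) (j : Fin n) : Prop := ∃ i, dbl G j i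

/-- alphabet size -/
noncomputable def cc (G : SDigraph (Fin n)) (j : Fin n) : ℕ :=
  if 3 ≤ G.outdeg j ∧ hasDbl G j then 4 else if 2 ≤ G.outdeg j then 3 else 2

noncomputable def top (G : SDigraph (Fin n)) (j : Fin n) : ℤ := (cc G j : ℤ) - 1

def skipC (G : SDigraph (Fin n)) (j : Fin n) : Prop := G.outdeg j = 2 ∧ hasDbl G j

def c2 (G : SDigraph (Fin n)) (j : Fin n) : Prop := G.outdeg j ≤ 1

noncomputable def scale (G : SDigraph (Fin n)) (j : Fin n) : ℤ := if skipC G j then 2 else 1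

noncomputable def Xs (G : SDigraph (Fin n)) (j : Fin n) : Finset ℤ := Finset.Icc 0 (top G j)

lemma cc_ge_two (G : SDigraph (Fin n)) (j : Fin n) : 2 ≤ cc G j := by
  unfold cc; split_ifs <;> omega

lemma top_ge_one (G : SDigraph (Fin n)) (j : Fin n) : 1 ≤ top G j := by
  unfold top; have := cc_ge_two G j; omega

lemma skip_cc (G : SDigraph (Fin n)) (j : Fin n) (h : skipC G j) : cc G j = 3 := by
  obtain ⟨h2, hd⟩ := h
  unfold cc
  split_ifs with hA hB
  · exact absurd hA.1 (by omega)
  · rfl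
  · exact absurd (by omega : 2 ≤ G.outdeg j) hB

lemma not_c2_cc (G : SDigraph (Fin n)) (j : Fin n) (h : ¬ c2 G j) : 3 ≤ cc G j := by
  unfold c2 at h; unfold cc; split_ifs with hA hB <;> omega

lemma c2_cc (G : SDigraph (Fin n)) (j : Fin n) (h : c2 G j) : cc G j = 2 := by
  unfold c2 at h; unfold cc
  split_ifs with hA hB
  · exact absurd hA.1 (by omega)
  · omega
  · rfl

lemma not_c2_top (G : SDigraph (Fin n)) (j : Fin n) (h : ¬ c2 G j) : 2 ≤ top G j := by
  have := not_c2_cc G j h; unfold top; omega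

lemma c2_top (G : SDigraph (Fin n)) (j : Fin n) (h : c2 G j) : top G j = 1 := by
  have := c2_cc G j h; unfold top; rw [this]; norm_num

lemma scale_le_top (G : SDigraph (Fin n)) (j : Fin n) : scale G j ≤ top G j := by
  unfold scale
  split_ifs with h
  · rw [show top G j = 2 by unfold top; rw [skip_cc G j h]; norm_num]
  · exact top_ge_one G j

lemma scale_pos (G : SDigraph (Fin n)) (j : Fin n) : 0 < scale G j := by
  unfold scale; split_ifs <;> norm_num

lemma mem_Xs (G : SDigraph (Fin n)) (j : Fin n) (v : ℤ) :
    v ∈ Xs G j ↔ 0 ≤ v ∧ v ≤ top G j := by unfold Xs; simp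

-- counting lemmas
lemma arc_outdeg_pos (G : SDigraph (Fin n)) {j i : Fin n} (h : G.arc j i) :
    1 ≤ G.outdeg j := by
  unfold SDigraph.outdeg
  rcases h with h | h
  · have : i ∈ Finset.univ.filter fun k => G.pos j k = true := by simp [h]
    have := Finset.card_pos.mpr ⟨i, this⟩; omega
  · have : i ∈ Finset.univ.filter fun k => G.neg j k = true := by simp [h]
    have := Finset.card_pos.mpr ⟨i, this⟩; omega

lemma dbl_outdeg (G : SDigraph (Fin n)) {j i : Fin n} (h : dbl G j i) :
    2 ≤ G.outdeg j := by
  unfold SDigraph.outdeg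
  have h1 : i ∈ Finset.univ.filter fun k => G.pos j k = true := by simp [h.1]
  have h2 : i ∈ Finset.univ.filter fun k => G.neg j k = true := by simp [h.2]
  have := Finset.card_pos.mpr ⟨i, h1⟩
  have := Finset.card_pos.mpr ⟨i, h2⟩
  omega

lemma c2_not_dbl (G : SDigraph (Fin n)) {j i : Fin n} (h : c2 G j) : ¬ dbl G j i :=
  fun hd => by have := dbl_outdeg G hd; unfold c2 at h; omega

lemma arcOut_card_le (G : SDigraph (Fin n)) (j : Fin n) :
    (Finset.univ.filter fun i => G.arc j i).card ≤ G.outdeg j := by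
  unfold SDigraph.outdeg
  rw [show (Finset.univ.filter fun i => G.arc j i) =
      (Finset.univ.filter fun i => G.pos j i = true) ∪
      (Finset.univ.filter fun i => G.neg j i = true) by
        ext k; rw [Finset.mem_union, Finset.mem_filter, Finset.mem_filter, Finset.mem_filter]; simp [SDigraph.arc]]
  exact Finset.card_union_le _ _

lemma out1_uniq (G : SDigraph (Fin n)) {j i i' : Fin n} (h : G.outdeg j = 1)
    (h1 : G.arc j i) (h2 : G.arc j i') : i = i' := by
  by_contra hne
  have hc : 2 ≤ (Finset.univ.filter fun k => G.arc j k).card :=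
    Finset.one_lt_card.mpr ⟨i, by simp [h1], i', by simp [h2], hne⟩
  have := arcOut_card_le G j
  omega

lemma skip_dbl (G : SDigraph (Fin n)) {j i : Fin n} (hs : skipC G j) (h : G.arc j i) :
    dbl G j i := by
  obtain ⟨h2, i0, hd⟩ := hs
  have hu : i = i0 := by
    by_contra hne
    -- two distinct arc targets, plus dbl at i0, gives outdeg ≥ 3
    unfold SDigraph.outdeg at h2
    have hp0 : i0 ∈ Finset.univ.filter fun k => G.pos j k = true := by simp [hd.1]
    have hn0 : i0 ∈ Finset.univ.filter fun k => G.neg j k = true := by simp [hd.2]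
    rcases h with h | h
    · have hp1 : i ∈ Finset.univ.filter fun k => G.pos j k = true := by simp [h]
      have : 2 ≤ (Finset.univ.filter fun k => G.pos j k = true).card :=
        Finset.one_lt_card.mpr ⟨i, hp1, i0, hp0, hne⟩
      have := Finset.card_pos.mpr ⟨i0, hn0⟩
      omega
    · have hn1 : i ∈ Finset.univ.filter fun k => G.neg j k = true := by simp [h]
      have : 2 ≤ (Finset.univ.filter fun k => G.neg j k = true).card :=
        Finset.one_lt_card.mpr ⟨i, hn1, i0, hn0, hne⟩
      have := Finset.card_pos.mpr ⟨i0, hp0⟩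
      omega
  rw [hu]; exact hd

/-- the unique out-neighbour of an out-degree-one vertex -/
noncomputable def nxt (G : SDigraph (Fin n)) (j : Fin n) : Fin n :=
  if h : ∃ i, G.arc j i ∧ G.outdeg j = 1 then Classical.choose h else j

lemma out1_arc_ex (G : SDigraph (Fin n)) {j : Fin n} (h : G.outdeg j = 1) :
    ∃ i, G.arc j i := by
  unfold SDigraph.outdeg at h
  rcases Nat.lt_or_ge 0 (Finset.univ.filter fun k => G.pos j k = true).card with h1 | h1
  · obtain ⟨i, hi⟩ := Finset.card_pos.mp h1
    exact ⟨i, Or.inl (Finset.mem_filter.mp hi).2⟩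
  · have : 0 < (Finset.univ.filter fun k => G.neg j k = true).card := by omega
    obtain ⟨i, hi⟩ := Finset.card_pos.mp this
    exact ⟨i, Or.inr (Finset.mem_filter.mp hi).2⟩

lemma nxt_arc (G : SDigraph (Fin n)) {j : Fin n} (h : G.outdeg j = 1) :
    G.arc j (nxt G j) := by
  unfold nxt
  have hex : ∃ i, G.arc j i ∧ G.outdeg j = 1 := by
    obtain ⟨i, hi⟩ := out1_arc_ex G h; exact ⟨i, hi, h⟩
  rw [dif_pos hex]
  exact (Classical.choose_spec hex).1

lemma arc_nxt (G : SDigraph (Fin n)) {j i : Fin n} (h : G.outdeg j = 1)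
    (ha : G.arc j i) : i = nxt G j :=
  out1_uniq G h ha (nxt_arc G h)

lemma nxt_fix (G : SDigraph (Fin n)) {j : Fin n} (h : ¬ G.outdeg j = 1) :
    nxt G j = j := by
  unfold nxt
  rw [dif_neg]; rintro ⟨i, _, h1⟩; exact h h1

/-- lies on a cycle of out-degree-one vertices -/
def bad (G : SDigraph (Fin n)) (j : Fin n) : Prop :=
  G.outdeg j = 1 ∧ ∃ k : ℕ, (nxt G)^[k + 1] j = j

lemma bad_nxt (G : SDigraph (Fin n)) {j : Fin n} (h : bad G j) : bad G (nxt G j) := by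
  obtain ⟨h1, k, hk⟩ := h
  have hout : G.outdeg (nxt G j) = 1 := by
    by_contra ho
    have hfix : ∀ m : ℕ, (nxt G)^[m + 1] j = nxt G j := by
      intro m
      induction m with
      | zero => simp
      | succ m ih =>
        rw [Function.iterate_succ_apply', ih, nxt_fix G ho]
    have h2 := hfix k
    rw [hk] at h2
    rw [← h2] at ho
    exact ho h1
  refine ⟨hout, k, ?_⟩
  rw [← Function.iterate_succ_apply, Function.iterate_succ_apply', hk]

lemma bad_iter (G : SDigraph (Fin n)) {j : Fin n} (h : bad G j) (t : ℕ) :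
    bad G ((nxt G)^[t] j) := by
  induction t with
  | zero => exact h
  | succ t ih => rw [Function.iterate_succ_apply']; exact bad_nxt G ih

lemma bad_out1 (G : SDigraph (Fin n)) {j : Fin n} (h : bad G j) : G.outdeg j = 1 := h.1

lemma bad_arc_bad (G : SDigraph (Fin n)) {j i : Fin n} (h : bad G j) (ha : G.arc j i) :
    i = nxt G j ∧ bad G i := by
  have := arc_nxt G h.1 ha
  exact ⟨this, this ▸ bad_nxt G h⟩

/-- a bad vertex is an iterate of its successor -/
lemma bad_pred_iter (G : SDigraph (Fin n)) {j : Fin n} (h : bad G j) :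
    ∃ p : ℕ, (nxt G)^[p] (nxt G j) = j := by
  obtain ⟨_, k, hk⟩ := h
  exact ⟨k, by rw [← Function.iterate_succ_apply]; exact hk⟩

lemma bad_pred_uniq (G : SDigraph (Fin n)) {j1 j2 : Fin n} (h1 : bad G j1) (h2 : bad G j2)
    (he : nxt G j1 = nxt G j2) : j1 = j2 := by
  obtain ⟨p, hp⟩ := bad_pred_iter G h1
  obtain ⟨q, hq⟩ := bad_pred_iter G h2
  rw [he] at hp
  set w := nxt G j2 with hw
  -- j1 = nxt^[p] w, j2 = nxt^[q] w, w = nxt^[p+1] w = nxt^[q+1] w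
  have hwp : (nxt G)^[p + 1] w = w := by
    rw [Function.iterate_succ_apply', hp, ← he]
  have hwq : (nxt G)^[q + 1] w = w := by
    rw [Function.iterate_succ_apply', hq]
  calc j1 = (nxt G)^[p] w := hp.symm
    _ = (nxt G)^[p] ((nxt G)^[q + 1] w) := by rw [hwq]
    _ = (nxt G)^[q] ((nxt G)^[p + 1] w) := by
        rw [← Function.iterate_add_apply, ← Function.iterate_add_apply]
        congr 1
        omega
    _ = (nxt G)^[q] w := by rw [hwp]
    _ = j2 := hq

lemma orbit_sym (G : SDigraph (Fin n)) {w z : Fin n} (h : bad G w) {t : ℕ}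
    (ht : (nxt G)^[t] w = z) : ∃ s : ℕ, (nxt G)^[s] z = w := by
  obtain ⟨_, k, hk⟩ := h
  have hmul : ∀ m : ℕ, (nxt G)^[m * (k + 1)] w = w := by
    intro m
    induction m with
    | zero => simp
    | succ m ih =>
      rw [Nat.succ_mul, Function.iterate_add_apply, hk, ih]
  refine ⟨t * k, ?_⟩
  rw [← ht, ← Function.iterate_add_apply]
  have : t * k + t = t * (k + 1) := by ring
  rw [this, hmul t]

end Fwd
namespace Fwd
open SDigraph Finset Function

variable {n : ℕ}

lemma sum_deg (G : SDigraph (Fin n)) :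
    ∑ i : Fin n, G.underIndeg i = ∑ j : Fin n, G.underOutdeg j := by
  unfold SDigraph.underIndeg SDigraph.underOutdeg
  simp only [Finset.card_filter]
  exact Finset.sum_comm

lemma exists_enter (G : SDigraph (Fin n)) (hconn : G.Connected)
    (hnc : ¬ G.IsSignedCycleGraph) {w : Fin n} (hb : bad G w) :
    ∃ w' m, (∃ t, (nxt G)^[t] w = w') ∧ ¬ bad G m ∧ G.arc m w' := by
  by_contra hno
  push_neg at hno
  have hO : ∀ v, ∃ t, (nxt G)^[t] w = v := by
    intro v
    have hpath := hconn w v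
    induction hpath with
    | refl => exact ⟨0, rfl⟩
    | @tail b c hpath hstep ih =>
      obtain ⟨t, ht⟩ := ih
      have hbadb : bad G b := ht ▸ bad_iter G hb t
      rcases hstep with harc | harc
      · obtain ⟨heq, _⟩ := bad_arc_bad G hbadb harc
        exact ⟨t + 1, by rw [Function.iterate_succ_apply', ht, ← heq]⟩
      · by_cases hc : bad G c
        · obtain ⟨heq, _⟩ := bad_arc_bad G hc harc
          obtain ⟨p, hp⟩ := bad_pred_iter G hc
          rw [← heq] at hp
          exact ⟨p + t, by rw [Function.iterate_add_apply, ht, hp]⟩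
        · exact absurd harc (hno b c ⟨t, ht⟩ hc)
  have allbad : ∀ v, bad G v := by
    intro v
    obtain ⟨t, ht⟩ := hO v
    exact ht ▸ bad_iter G hb t
  apply hnc
  have hop : ∀ v, G.underOutdeg v = 1 := by
    intro v
    have h1 : (Finset.univ.filter fun i => G.arc v i).card ≤ 1 := by
      have := arcOut_card_le G v
      rw [(allbad v).1] at this
      exact this
    have h2 : 1 ≤ (Finset.univ.filter fun i => G.arc v i).card :=
      Finset.card_pos.mpr ⟨nxt G v, by simp [nxt_arc G (allbad v).1]⟩
    unfold SDigraph.underOutdeg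
    omega
  have hin1 : ∀ v, 1 ≤ G.underIndeg v := by
    intro v
    obtain ⟨h1, k, hk⟩ := allbad v
    have hp : bad G ((nxt G)^[k] v) := bad_iter G (allbad v) k
    have harc : G.arc ((nxt G)^[k] v) (nxt G ((nxt G)^[k] v)) := nxt_arc G hp.1
    have hnv : nxt G ((nxt G)^[k] v) = v := by
      rw [← Function.iterate_succ_apply' (nxt G) k v]; exact hk
    rw [hnv] at harc
    exact Finset.card_pos.mpr ⟨(nxt G)^[k] v, by simp [harc]⟩
  have hinall : ∀ v, G.underIndeg v = 1 := by
    by_contra hne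
    push_neg at hne
    obtain ⟨v0, hv0⟩ := hne
    have hlt : ∑ i : Fin n, (1 : ℕ) < ∑ i : Fin n, G.underIndeg i := by
      apply Finset.sum_lt_sum
      · intro i _; exact hin1 i
      · exact ⟨v0, Finset.mem_univ v0, by have := hin1 v0; omega⟩
    rw [sum_deg] at hlt
    have : ∑ j : Fin n, G.underOutdeg j = ∑ j : Fin n, (1 : ℕ) := by
      apply Finset.sum_congr rfl; intro j _; exact hop j
    omega
  refine ⟨Fintype.card_pos_iff.mpr ⟨w⟩, hconn, ?_, hop, hinall⟩
  intro a b hab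
  have := dbl_outdeg G (i := b) ⟨hab.1, hab.2⟩
  have := (allbad a).1
  omega

/-- heads: bad vertices receiving an arc from outside the bad set -/
def head (G : SDigraph (Fin n)) (w : Fin n) : Prop :=
  bad G w ∧ ∃ m, ¬ bad G m ∧ G.arc m w

noncomputable def mOf (G : SDigraph (Fin n)) (w : Fin n) : Fin n :=
  if h : ∃ m, ¬ bad G m ∧ G.arc m w then Classical.choose h else w

noncomputable def uOf (G : SDigraph (Fin n)) (w : Fin n) : Fin n :=
  if h : ∃ j, bad G j ∧ nxt G j = w then Classical.choose h else w

lemma mOf_spec (G : SDigraph (Fin n)) {w : Fin n} (h : head G w) :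
    ¬ bad G (mOf G w) ∧ G.arc (mOf G w) w := by
  unfold mOf
  rw [dif_pos h.2]
  exact Classical.choose_spec h.2

lemma uOf_spec (G : SDigraph (Fin n)) {w : Fin n} (h : bad G w) :
    bad G (uOf G w) ∧ nxt G (uOf G w) = w := by
  have hex : ∃ j, bad G j ∧ nxt G j = w := by
    obtain ⟨h1, k, hk⟩ := id h
    refine ⟨(nxt G)^[k] w, bad_iter G h k, ?_⟩
    rw [← Function.iterate_succ_apply' (nxt G) k w]; exact hk
  unfold uOf
  rw [dif_pos hex]
  exact Classical.choose_spec hex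

lemma uOf_uniq (G : SDigraph (Fin n)) {w j : Fin n} (hw : bad G w) (hj : bad G j)
    (hn : nxt G j = w) : j = uOf G w :=
  bad_pred_uniq G hj (uOf_spec G hw).1 (by rw [hn, (uOf_spec G hw).2])

lemma arc_uOf (G : SDigraph (Fin n)) {w : Fin n} (h : bad G w) : G.arc (uOf G w) w := by
  have hs := uOf_spec G h
  have := nxt_arc G hs.1.1
  rw [hs.2] at this
  exact this

lemma head_exists (G : SDigraph (Fin n)) (hconn : G.Connected)
    (hnc : ¬ G.IsSignedCycleGraph) {z : Fin n} (hb : bad G z) :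
    ∃ w t, (nxt G)^[t] z = w ∧ head G w := by
  obtain ⟨w', m, ⟨t, ht⟩, hm, harc⟩ := exists_enter G hconn hnc hb
  exact ⟨w', t, ht, ht ▸ bad_iter G hb t, m, hm, harc⟩

lemma uOf_ne_mOf (G : SDigraph (Fin n)) {w : Fin n} (h : head G w) :
    uOf G w ≠ mOf G w := by
  intro heq
  have h1 := (uOf_spec G h.1).1
  rw [heq] at h1
  exact (mOf_spec G h).1 h1

end Fwd
namespace Fwd
open SDigraph Finset Function

variable {n : ℕ}

def act (G : SDigraph (Fin n)) (j i : Fin n) (v : ℤ) : Prop :=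
  if dbl G j i then (if skipC G j then v = 1 else v = 2)
  else if G.pos j i = true then (if c2 G j then v = 1 else v = top G j)
  else (if c2 G j then v = 0 else v ≤ top G j - 1)

def lact (G : SDigraph (Fin n)) (w : Fin n) (v : ℤ) : Prop :=
  if G.pos (uOf G w) w = true then v = 1 else v = 0

noncomputable def sVal (G : SDigraph (Fin n)) (e : Fin n → ℤ) (w : Fin n) : ℤ :=
  if c2 G (mOf G w) then 1 - e (mOf G w)
  else if skipC G (mOf G w) then 1
  else if dbl G (mOf G w) w then 2
  else top G (mOf G w)

def cmbAct (G : SDigraph (Fin n)) (e : Fin n → ℤ) (w : Fin n) (x : Fin n → ℤ) : Prop :=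
  (x (mOf G w) = sVal G e w ∧ lact G w (x (uOf G w))) ∨
  (x (mOf G w) ≠ sVal G e w ∧ act G (mOf G w) w (x (mOf G w)))

noncomputable def ff (G : SDigraph (Fin n)) (e : Fin n → ℤ) (x : Fin n → ℤ) (i : Fin n) : ℤ :=
  if head G i then
    (if cmbAct G e i x ∨ ∃ j, G.arc j i ∧ j ≠ uOf G i ∧ j ≠ mOf G i ∧ act G j i (x j)
      then scale G i else 0)
  else (if ∃ j, G.arc j i ∧ act G j i (x j) then scale G i else 0)

noncomputable def fPlain (G : SDigraph (Fin n)) (x : Fin n → ℤ) (i : Fin n) : ℤ :=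
  if ∃ j, G.arc j i ∧ act G j i (x j) then scale G i else 0

def memBox (G : SDigraph (Fin n)) (x : Fin n → ℤ) : Prop :=
  ∀ i, x i = 0 ∨ x i = scale G i

lemma ff_range (G : SDigraph (Fin n)) (e x : Fin n → ℤ) (i : Fin n) :
    ff G e x i = 0 ∨ ff G e x i = scale G i := by
  unfold ff; split_ifs <;> simp

lemma fPlain_range (G : SDigraph (Fin n)) (x : Fin n → ℤ) (i : Fin n) :
    fPlain G x i = 0 ∨ fPlain G x i = scale G i := by
  unfold fPlain; split_ifs <;> simp

lemma memBox_mem (G : SDigraph (Fin n)) {x : Fin n → ℤ} (h : memBox G x) (i : Fin n) :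
    x i ∈ Xs G i := by
  rw [mem_Xs]
  rcases h i with h1 | h1 <;> rw [h1]
  · exact ⟨le_refl 0, by linarith [top_ge_one G i]⟩
  · exact ⟨(scale_pos G i).le, scale_le_top G i⟩

lemma ff_memBox (G : SDigraph (Fin n)) (e : Fin n → ℤ) (x : Fin n → ℤ) :
    memBox G (ff G e x) := fun i => ff_range G e x i

lemma ff_not_head (G : SDigraph (Fin n)) (e x : Fin n → ℤ) {i : Fin n}
    (h : ¬ head G i) : ff G e x i = fPlain G x i := by
  unfold ff fPlain; rw [if_neg h]

lemma fPlain_agree (G : SDigraph (Fin n)) {x y : Fin n → ℤ} {i : Fin n}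
    (h : ∀ k, G.arc k i → x k = y k) : fPlain G x i = fPlain G y i := by
  unfold fPlain
  congr 1
  apply propext
  constructor
  · rintro ⟨j, hj, ha⟩; exact ⟨j, hj, by rwa [← h j hj]⟩
  · rintro ⟨j, hj, ha⟩; exact ⟨j, hj, by rwa [h j hj]⟩

lemma ff_agree (G : SDigraph (Fin n)) (e : Fin n → ℤ) {x y : Fin n → ℤ} {i : Fin n}
    (h : ∀ k, G.arc k i → x k = y k) : ff G e x i = ff G e y i := by
  by_cases hh : head G i
  · unfold ff
    rw [if_pos hh, if_pos hh]
    congr 1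
    apply propext
    have hu : x (uOf G i) = y (uOf G i) := h _ (arc_uOf G hh.1)
    have hm : x (mOf G i) = y (mOf G i) := h _ (mOf_spec G hh).2
    constructor
    · rintro (hc | ⟨j, hj, h1, h2, ha⟩)
      · left; unfold cmbAct at hc ⊢; rw [← hu, ← hm]; exact hc
      · right; exact ⟨j, hj, h1, h2, by rwa [← h j hj]⟩
    · rintro (hc | ⟨j, hj, h1, h2, ha⟩)
      · left; unfold cmbAct at hc ⊢; rw [hu, hm]; exact hc
      · right; exact ⟨j, hj, h1, h2, by rwa [h j hj]⟩
  · rw [ff_not_head G e x hh, ff_not_head G e y hh]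
    exact fPlain_agree G h

lemma head_bad (G : SDigraph (Fin n)) {w : Fin n} (h : head G w) : bad G w := h.1

/-- arcs leaving bad vertices end in bad vertices, so coordinates of non-bad
vertices evolve identically under `ff` and `fPlain` -/
lemma arc_to_nonbad (G : SDigraph (Fin n)) {j i : Fin n} (hi : ¬ bad G i)
    (ha : G.arc j i) : ¬ bad G j := fun hj => hi (bad_arc_bad G hj ha).2

lemma traj_eq_plain (G : SDigraph (Fin n)) (e : Fin n → ℤ) (x : Fin n → ℤ) :
    ∀ t (m : Fin n), ¬ bad G m → (ff G e)^[t] x m = (fPlain G)^[t] x m := by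
  intro t
  induction t with
  | zero => intro m _; rfl
  | succ t ih =>
    intro m hm
    rw [Function.iterate_succ_apply', Function.iterate_succ_apply']
    rw [ff_not_head G e _ (fun hh => hm (head_bad G hh))]
    exact fPlain_agree G (fun k hk => ih k (arc_to_nonbad G hm hk))

end Fwd
namespace Fwd
open SDigraph Finset Function

variable {n : ℕ}

lemma uOf_c2 (G : SDigraph (Fin n)) {w : Fin n} (hb : bad G w) : c2 G (uOf G w) := by
  have := (uOf_spec G hb).1.1; unfold c2; omega

lemma ite_scale_mono {c c' : Prop} [Decidable c] [Decidable c'] (h : c → c') {s : ℤ} (hs : 0 ≤ s) :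
    (if c then s else 0) ≤ (if c' then s else 0) := by
  split_ifs with h1 h2 h2
  · exact le_refl s
  · exact absurd (h h1) h2
  · exact hs
  · exact le_refl 0

lemma act_up (G : SDigraph (Fin n)) {j i : Fin n} (harc : G.arc j i)
    (hneg : ¬ G.neg j i = true) {v : ℤ} (h1 : v + 1 ≤ top G j)
    (ha : act G j i v) : act G j i (v + 1) := by
  exfalso
  have hpos : G.pos j i = true := harc.resolve_right hneg
  have hnd : ¬ dbl G j i := fun hd => hneg hd.2
  unfold act at ha
  rw [if_neg hnd, if_pos hpos] at ha
  split_ifs at ha with hc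
  · have := c2_top G j hc; omega
  · omega

lemma act_down (G : SDigraph (Fin n)) {j i : Fin n} (harc : G.arc j i)
    (hpos : ¬ G.pos j i = true) {v : ℤ} (h0 : 0 ≤ v)
    (ha : act G j i (v + 1)) : act G j i v := by
  have hneg : G.neg j i = true := harc.resolve_left hpos
  have hnd : ¬ dbl G j i := fun hd => hpos hd.1
  unfold act at ha ⊢
  rw [if_neg hnd, if_neg hpos] at ha ⊢
  split_ifs at ha ⊢ with hc
  · omega
  · omega

lemma lact_up_absurd (G : SDigraph (Fin n)) {i : Fin n} (hh : head G i)
    (hneg : ¬ G.neg (uOf G i) i = true) {v : ℤ} (h1 : v + 1 ≤ top G (uOf G i))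
    (hl : lact G i v) : False := by
  have harc := arc_uOf G hh.1
  have hpos : G.pos (uOf G i) i = true := harc.resolve_right hneg
  unfold lact at hl
  rw [if_pos hpos] at hl
  have := c2_top G (uOf G i) (uOf_c2 G hh.1)
  omega

lemma lact_down_absurd (G : SDigraph (Fin n)) {i : Fin n} (hh : head G i)
    (hpos : ¬ G.pos (uOf G i) i = true) {v : ℤ} (h0 : 0 ≤ v)
    (hl : lact G i (v + 1)) : False := by
  unfold lact at hl
  rw [if_neg hpos] at hl
  omega

lemma cmb_up (G : SDigraph (Fin n)) (e : Fin n → ℤ) {i : Fin n} (hh : head G i)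
    (heB : ∀ m, ¬ bad G m → c2 G m → e m = 0 ∨ e m = 1)
    (hneg : ¬ G.neg (mOf G i) i = true) {x : Fin n → ℤ}
    (h0 : 0 ≤ x (mOf G i)) (h1 : x (mOf G i) + 1 ≤ top G (mOf G i))
    (hc : cmbAct G e i x) :
    cmbAct G e i (Function.update x (mOf G i) (x (mOf G i) + 1)) := by
  have hmu : uOf G i ≠ mOf G i := uOf_ne_mOf G hh
  have harc := (mOf_spec G hh).2
  have hpos : G.pos (mOf G i) i = true := harc.resolve_right hneg
  have hnb : ¬ bad G (mOf G i) := (mOf_spec G hh).1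
  unfold cmbAct at hc ⊢
  rw [Function.update_self, Function.update_of_ne hmu]
  by_cases hcm : c2 G (mOf G i)
  · have htop := c2_top G (mOf G i) hcm
    have hx0 : x (mOf G i) = 0 := by omega
    have hnd : ¬ dbl G (mOf G i) i := c2_not_dbl G hcm
    have hs : sVal G e i = 1 - e (mOf G i) := by unfold sVal; rw [if_pos hcm]
    rcases hc with ⟨hm0, _⟩ | ⟨_, hact⟩
    · have he1 : e (mOf G i) = 1 := by
        rcases heB _ hnb hcm with h | h
        · rw [hs, h] at hm0; omega
        · exact h
      right
      constructor
      · rw [hs, he1]; omega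
      · unfold act
        rw [if_neg hnd, if_pos hpos, if_pos hcm]
        omega
    · exfalso
      unfold act at hact
      rw [if_neg hnd, if_pos hpos, if_pos hcm] at hact
      omega
  · by_cases hsk : skipC G (mOf G i)
    · exact absurd (skip_dbl G hsk harc).2 hneg
    · have hnd : ¬ dbl G (mOf G i) i := fun hd => hneg hd.2
      have hs : sVal G e i = top G (mOf G i) := by
        unfold sVal; rw [if_neg hcm, if_neg hsk, if_neg hnd]
      rcases hc with ⟨hm0, _⟩ | ⟨_, hact⟩
      · exfalso; rw [hs] at hm0; omega
      · exfalso
        unfold act at hact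
        rw [if_neg hnd, if_pos hpos, if_neg hcm] at hact
        omega

lemma cmb_down (G : SDigraph (Fin n)) (e : Fin n → ℤ) {i : Fin n} (hh : head G i)
    (hpos : ¬ G.pos (mOf G i) i = true) {x : Fin n → ℤ}
    (h0 : 0 ≤ x (mOf G i)) (h1 : x (mOf G i) + 1 ≤ top G (mOf G i))
    (hc : cmbAct G e i (Function.update x (mOf G i) (x (mOf G i) + 1))) :
    cmbAct G e i x := by
  have hmu : uOf G i ≠ mOf G i := uOf_ne_mOf G hh
  have harc := (mOf_spec G hh).2
  have hneg : G.neg (mOf G i) i = true := harc.resolve_left hpos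
  unfold cmbAct at hc ⊢
  rw [Function.update_self, Function.update_of_ne hmu] at hc
  by_cases hcm : c2 G (mOf G i)
  · have htop := c2_top G (mOf G i) hcm
    have hx0 : x (mOf G i) = 0 := by omega
    have hnd : ¬ dbl G (mOf G i) i := c2_not_dbl G hcm
    have hs : sVal G e i = 1 - e (mOf G i) := by unfold sVal; rw [if_pos hcm]
    rcases hc with ⟨hm0, _⟩ | ⟨_, hact⟩
    · right
      constructor
      · omega
      · unfold act
        rw [if_neg hnd, if_neg hpos, if_pos hcm]
        omega
    · exfalso
      unfold act at hact
      rw [if_neg hnd, if_neg hpos, if_pos hcm] at hact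
      omega
  · by_cases hsk : skipC G (mOf G i)
    · exact absurd (skip_dbl G hsk harc).1 hpos
    · have hnd : ¬ dbl G (mOf G i) i := fun hd => hpos hd.1
      have hs : sVal G e i = top G (mOf G i) := by
        unfold sVal; rw [if_neg hcm, if_neg hsk, if_neg hnd]
      have htop := not_c2_top G (mOf G i) hcm
      have hactx : act G (mOf G i) i (x (mOf G i)) := by
        unfold act
        rw [if_neg hnd, if_neg hpos, if_neg hcm]
        rcases hc with ⟨hm0, _⟩ | ⟨_, hact⟩
        · omega
        · unfold act at hact
          rw [if_neg hnd, if_neg hpos, if_neg hcm] at hact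
          omega
      right
      refine ⟨?_, hactx⟩
      rw [hs]
      unfold act at hactx
      rw [if_neg hnd, if_neg hpos, if_neg hcm] at hactx
      omega

lemma ff_mono_up (G : SDigraph (Fin n)) (e : Fin n → ℤ)
    (heB : ∀ m, ¬ bad G m → c2 G m → e m = 0 ∨ e m = 1) {j i : Fin n}
    (hneg : ¬ G.neg j i = true) {x : Fin n → ℤ}
    (hx : ∀ k, x k ∈ Xs G k) (hx1 : x j + 1 ∈ Xs G j) :
    ff G e x i ≤ ff G e (Function.update x j (x j + 1)) i := by
  by_cases harc : G.arc j i
  · have hxj0 : 0 ≤ x j := ((mem_Xs G j _).mp (hx j)).1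
    have hxj1 : x j + 1 ≤ top G j := ((mem_Xs G j _).mp hx1).2
    unfold ff
    by_cases hh : head G i
    · rw [if_pos hh, if_pos hh]
      apply ite_scale_mono _ (scale_pos G i).le
      rintro (hcmb | ⟨k, hk, hku, hkm, hact⟩)
      · left
        by_cases hjm : j = mOf G i
        · subst hjm; exact cmb_up G e hh heB hneg hxj0 hxj1 hcmb
        · by_cases hju : j = uOf G i
          · subst hju
            rcases hcmb with ⟨hm0, hl⟩ | ⟨hne', hact⟩
            · exact absurd hl (fun hl => lact_up_absurd G hh hneg hxj1 hl)
            · right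
              rw [Function.update_of_ne (fun h => hjm h.symm)]
              exact ⟨hne', hact⟩
          · unfold cmbAct at hcmb ⊢
            rw [Function.update_of_ne (fun h => hjm h.symm),
              Function.update_of_ne (fun h => hju h.symm)]
            exact hcmb
      · right
        by_cases hkj : k = j
        · subst hkj
          exact ⟨k, hk, hku, hkm, by
            rw [Function.update_self]
            exact act_up G hk hneg hxj1 hact⟩
        · exact ⟨k, hk, hku, hkm, by rwa [Function.update_of_ne hkj]⟩
    · rw [if_neg hh, if_neg hh]
      apply ite_scale_mono _ (scale_pos G i).le
      rintro ⟨k, hk, hact⟩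
      by_cases hkj : k = j
      · subst hkj
        exact ⟨k, hk, by rw [Function.update_self]; exact act_up G hk hneg hxj1 hact⟩
      · exact ⟨k, hk, by rwa [Function.update_of_ne hkj]⟩
  · apply le_of_eq
    apply ff_agree
    intro k hk
    exact (Function.update_of_ne (fun h => harc (by rw [← h]; exact hk)) _ x).symm

lemma ff_mono_down (G : SDigraph (Fin n)) (e : Fin n → ℤ) {j i : Fin n}
    (hpos : ¬ G.pos j i = true) {x : Fin n → ℤ}
    (hx : ∀ k, x k ∈ Xs G k) (hx1 : x j + 1 ∈ Xs G j) :
    ff G e (Function.update x j (x j + 1)) i ≤ ff G e x i := by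
  by_cases harc : G.arc j i
  · have hxj0 : 0 ≤ x j := ((mem_Xs G j _).mp (hx j)).1
    have hxj1 : x j + 1 ≤ top G j := ((mem_Xs G j _).mp hx1).2
    unfold ff
    by_cases hh : head G i
    · rw [if_pos hh, if_pos hh]
      apply ite_scale_mono _ (scale_pos G i).le
      rintro (hcmb | ⟨k, hk, hku, hkm, hact⟩)
      · left
        by_cases hjm : j = mOf G i
        · subst hjm; exact cmb_down G e hh hpos hxj0 hxj1 hcmb
        · by_cases hju : j = uOf G i
          · subst hju
            rcases hcmb with ⟨hm0, hl⟩ | ⟨hne', hact⟩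
            · rw [Function.update_self] at hl
              exact absurd hl (fun hl => lact_down_absurd G hh hpos hxj0 hl)
            · rw [Function.update_of_ne (fun h => hjm h.symm)] at hne' hact
              exact Or.inr ⟨hne', hact⟩
          · unfold cmbAct at hcmb ⊢
            rw [Function.update_of_ne (fun h => hjm h.symm),
              Function.update_of_ne (fun h => hju h.symm)] at hcmb
            exact hcmb
      · right
        by_cases hkj : k = j
        · subst hkj
          rw [Function.update_self] at hact
          exact ⟨k, hk, hku, hkm, act_down G hk hpos hxj0 hact⟩
        · rw [Function.update_of_ne hkj] at hact
          exact ⟨k, hk, hku, hkm, hact⟩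
    · rw [if_neg hh, if_neg hh]
      apply ite_scale_mono _ (scale_pos G i).le
      rintro ⟨k, hk, hact⟩
      by_cases hkj : k = j
      · subst hkj
        rw [Function.update_self] at hact
        exact ⟨k, hk, act_down G hk hpos hxj0 hact⟩
      · rw [Function.update_of_ne hkj] at hact
        exact ⟨k, hk, hact⟩
  · apply le_of_eq
    apply ff_agree
    intro k hk
    exact Function.update_of_ne (fun h => harc (by rw [← h]; exact hk)) _ x

end Fwd
namespace Fwd
open SDigraph Finset Function

variable {n : ℕ}

-- evaluation lemmas for act
lemma act_eval_dbl_skip (G : SDigraph (Fin n)) {j i : Fin n} (hd : dbl G j i)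
    (hs : skipC G j) (v : ℤ) : act G j i v ↔ v = 1 := by
  unfold act; rw [if_pos hd, if_pos hs]

lemma act_eval_dbl_ns (G : SDigraph (Fin n)) {j i : Fin n} (hd : dbl G j i)
    (hs : ¬ skipC G j) (v : ℤ) : act G j i v ↔ v = 2 := by
  unfold act; rw [if_pos hd, if_neg hs]

lemma act_eval_pos_c2 (G : SDigraph (Fin n)) {j i : Fin n} (hd : ¬ dbl G j i)
    (hp : G.pos j i = true) (hc : c2 G j) (v : ℤ) : act G j i v ↔ v = 1 := by
  unfold act; rw [if_neg hd, if_pos hp, if_pos hc]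

lemma act_eval_pos_nc (G : SDigraph (Fin n)) {j i : Fin n} (hd : ¬ dbl G j i)
    (hp : G.pos j i = true) (hc : ¬ c2 G j) (v : ℤ) : act G j i v ↔ v = top G j := by
  unfold act; rw [if_neg hd, if_pos hp, if_neg hc]

lemma act_eval_neg_c2 (G : SDigraph (Fin n)) {j i : Fin n} (hd : ¬ dbl G j i)
    (hp : ¬ G.pos j i = true) (hc : c2 G j) (v : ℤ) : act G j i v ↔ v = 0 := by
  unfold act; rw [if_neg hd, if_neg hp, if_pos hc]

lemma act_eval_neg_nc (G : SDigraph (Fin n)) {j i : Fin n} (hd : ¬ dbl G j i)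
    (hp : ¬ G.pos j i = true) (hc : ¬ c2 G j) (v : ℤ) :
    act G j i v ↔ v ≤ top G j - 1 := by
  unfold act; rw [if_neg hd, if_neg hp, if_neg hc]

lemma dbl_ns_top (G : SDigraph (Fin n)) {j i : Fin n} (hd : dbl G j i)
    (hs : ¬ skipC G j) : top G j = 3 := by
  have h2 := dbl_outdeg G hd
  have h3 : 3 ≤ G.outdeg j := by
    rcases Nat.lt_or_ge (G.outdeg j) 3 with h | h
    · exfalso; exact hs ⟨by omega, ⟨i, hd⟩⟩
    · exact h
  unfold top cc
  rw [if_pos ⟨h3, ⟨i, hd⟩⟩]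
  norm_num

lemma skip_top (G : SDigraph (Fin n)) {j : Fin n} (hs : skipC G j) : top G j = 2 := by
  unfold top; rw [skip_cc G j hs]; norm_num

-- base state
noncomputable def zst (G : SDigraph (Fin n)) (i : Fin n) : Fin n → ℤ :=
  fun k => if G.neg k i = true ∧ ¬ G.pos k i = true then (if c2 G k then 1 else top G k) else 0

lemma zst_mem (G : SDigraph (Fin n)) (i k : Fin n) : zst G i k ∈ Xs G k := by
  rw [mem_Xs]; unfold zst
  have h1 := top_ge_one G k
  split_ifs with ha hb
  · rw [c2_top G k hb]; omega
  · omega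
  · omega

lemma zst_not_act (G : SDigraph (Fin n)) (i k : Fin n) (hk : G.arc k i) :
    ¬ act G k i (zst G i k) := by
  intro hact
  by_cases hd : dbl G k i
  · have hz : zst G i k = 0 := by
      unfold zst; rw [if_neg]; rintro ⟨_, hc⟩; exact hc hd.1
    by_cases hs : skipC G k
    · rw [act_eval_dbl_skip G hd hs, hz] at hact; norm_num at hact
    · rw [act_eval_dbl_ns G hd hs, hz] at hact; norm_num at hact
  · by_cases hp : G.pos k i = true
    · have hz : zst G i k = 0 := by
        unfold zst; rw [if_neg]; rintro ⟨_, hc⟩; exact hc hp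
      by_cases hc : c2 G k
      · rw [act_eval_pos_c2 G hd hp hc, hz] at hact; norm_num at hact
      · rw [act_eval_pos_nc G hd hp hc, hz] at hact
        have := not_c2_top G k hc; omega
    · have hn : G.neg k i = true := hk.resolve_left hp
      by_cases hc : c2 G k
      · have hz : zst G i k = 1 := by unfold zst; rw [if_pos ⟨hn, hp⟩, if_pos hc]
        rw [act_eval_neg_c2 G hd hp hc, hz] at hact; norm_num at hact
      · have hz : zst G i k = top G k := by unfold zst; rw [if_pos ⟨hn, hp⟩, if_neg hc]
        rw [act_eval_neg_nc G hd hp hc, hz] at hact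
        omega

lemma zst_not_lact (G : SDigraph (Fin n)) {i : Fin n} (hh : head G i) :
    ¬ lact G i (zst G i (uOf G i)) := by
  intro hl
  unfold lact at hl
  have harc := arc_uOf G hh.1
  by_cases hp : G.pos (uOf G i) i = true
  · have hz : zst G i (uOf G i) = 0 := by
      unfold zst; rw [if_neg]; rintro ⟨_, hc⟩; exact hc hp
    rw [if_pos hp, hz] at hl; norm_num at hl
  · have hn := harc.resolve_left hp
    have hz : zst G i (uOf G i) = 1 := by
      unfold zst; rw [if_pos ⟨hn, hp⟩, if_pos (uOf_c2 G hh.1)]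
    rw [if_neg hp, hz] at hl; norm_num at hl

-- evaluation of ff
lemma ff_head_eval (G : SDigraph (Fin n)) (e : Fin n → ℤ) {i : Fin n} (hh : head G i)
    {x : Fin n → ℤ}
    (hsup : ∀ k, G.arc k i → k ≠ uOf G i → k ≠ mOf G i → ¬ act G k i (x k)) :
    ff G e x i = if cmbAct G e i x then scale G i else 0 := by
  unfold ff
  rw [if_pos hh]
  by_cases hc : cmbAct G e i x
  · rw [if_pos hc, if_pos (Or.inl hc)]
  · rw [if_neg hc, if_neg]
    rintro (h | ⟨k, hk, h1, h2, ha⟩)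
    · exact hc h
    · exact hsup k hk h1 h2 ha

lemma ff_nonhead_eval_false (G : SDigraph (Fin n)) (e : Fin n → ℤ) {i : Fin n}
    (hh : ¬ head G i) {x : Fin n → ℤ}
    (hsup : ∀ k, G.arc k i → ¬ act G k i (x k)) : ff G e x i = 0 := by
  unfold ff
  rw [if_neg hh, if_neg]
  rintro ⟨k, hk, ha⟩
  exact hsup k hk ha

lemma ff_nonhead_eval_true (G : SDigraph (Fin n)) (e : Fin n → ℤ) {i k : Fin n}
    (hh : ¬ head G i) {x : Fin n → ℤ} (hk : G.arc k i) (ha : act G k i (x k)) :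
    ff G e x i = scale G i := by
  unfold ff
  rw [if_neg hh, if_pos ⟨k, hk, ha⟩]

-- generic witness (j not playing a special role at i)
lemma witness_core (G : SDigraph (Fin n)) (e : Fin n → ℤ) {j i : Fin n} {p : ℤ}
    (harc : G.arc j i) (hside : ¬ head G i ∨ (j ≠ uOf G i ∧ j ≠ mOf G i))
    (hp0 : 0 ≤ p) (hp1 : p + 1 ≤ top G j)
    (hA : ¬ act G j i p) (hB : act G j i (p + 1)) :
    ∃ x, (∀ k, x k ∈ Xs G k) ∧ x j + 1 ∈ Xs G j ∧
      ff G e x i = 0 ∧ ff G e (Function.update x j (x j + 1)) i = scale G i := by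
  set x := Function.update (zst G i) j p with hxdef
  have hxj : x j = p := Function.update_self j p (zst G i)
  have hxk : ∀ k, k ≠ j → x k = zst G i k := fun k hk => Function.update_of_ne hk p (zst G i)
  have hmem : ∀ k, x k ∈ Xs G k := by
    intro k
    by_cases hk : k = j
    · subst hk; rw [hxj, mem_Xs]; omega
    · rw [hxk k hk]; exact zst_mem G i k
  have hx'j : Function.update x j (x j + 1) j = p + 1 := by
    rw [Function.update_self, hxj]
  have hx'k : ∀ k, k ≠ j → Function.update x j (x j + 1) k = zst G i k := by
    intro k hk; rw [Function.update_of_ne hk, hxk k hk]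
  refine ⟨x, hmem, by rw [hxj, mem_Xs]; omega, ?_, ?_⟩
  · by_cases hh : head G i
    · obtain ⟨hju, hjm⟩ := hside.resolve_left (fun h => h hh)
      rw [ff_head_eval G e hh ?hsup]
      case hsup =>
        intro k hk h1 h2 ha
        by_cases hkj : k = j
        · subst hkj; rw [hxj] at ha; exact hA ha
        · rw [hxk k hkj] at ha; exact zst_not_act G i k hk ha
      rw [if_neg]
      have hxm : x (mOf G i) = zst G i (mOf G i) := hxk _ (fun h => hjm h.symm)
      have hxu : x (uOf G i) = zst G i (uOf G i) := hxk _ (fun h => hju h.symm)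
      rintro (⟨_, hl⟩ | ⟨_, ha⟩)
      · rw [hxu] at hl; exact zst_not_lact G hh hl
      · rw [hxm] at ha; exact zst_not_act G i _ (mOf_spec G hh).2 ha
    · apply ff_nonhead_eval_false G e hh
      intro k hk ha
      by_cases hkj : k = j
      · subst hkj; rw [hxj] at ha; exact hA ha
      · rw [hxk k hkj] at ha; exact zst_not_act G i k hk ha
  · by_cases hh : head G i
    · obtain ⟨hju, hjm⟩ := hside.resolve_left (fun h => h hh)
      unfold ff
      rw [if_pos hh, if_pos]
      right
      exact ⟨j, harc, hju, hjm, by rw [hx'j]; exact hB⟩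
    · apply ff_nonhead_eval_true G e hh harc
      rw [hx'j]; exact hB

lemma witness_core' (G : SDigraph (Fin n)) (e : Fin n → ℤ) {j i : Fin n} {p : ℤ}
    (harc : G.arc j i) (hside : ¬ head G i ∨ (j ≠ uOf G i ∧ j ≠ mOf G i))
    (hp0 : 0 ≤ p) (hp1 : p + 1 ≤ top G j)
    (hA : act G j i p) (hB : ¬ act G j i (p + 1)) :
    ∃ x, (∀ k, x k ∈ Xs G k) ∧ x j + 1 ∈ Xs G j ∧
      ff G e x i = scale G i ∧ ff G e (Function.update x j (x j + 1)) i = 0 := by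
  set x := Function.update (zst G i) j p with hxdef
  have hxj : x j = p := Function.update_self j p (zst G i)
  have hxk : ∀ k, k ≠ j → x k = zst G i k := fun k hk => Function.update_of_ne hk p (zst G i)
  have hmem : ∀ k, x k ∈ Xs G k := by
    intro k
    by_cases hk : k = j
    · subst hk; rw [hxj, mem_Xs]; omega
    · rw [hxk k hk]; exact zst_mem G i k
  have hx'j : Function.update x j (x j + 1) j = p + 1 := by
    rw [Function.update_self, hxj]
  have hx'k : ∀ k, k ≠ j → Function.update x j (x j + 1) k = zst G i k := by
    intro k hk; rw [Function.update_of_ne hk, hxk k hk]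
  refine ⟨x, hmem, by rw [hxj, mem_Xs]; omega, ?_, ?_⟩
  · by_cases hh : head G i
    · obtain ⟨hju, hjm⟩ := hside.resolve_left (fun h => h hh)
      unfold ff
      rw [if_pos hh, if_pos]
      right
      exact ⟨j, harc, hju, hjm, by rw [hxj]; exact hA⟩
    · apply ff_nonhead_eval_true G e hh harc
      rw [hxj]; exact hA
  · by_cases hh : head G i
    · obtain ⟨hju, hjm⟩ := hside.resolve_left (fun h => h hh)
      rw [ff_head_eval G e hh ?hsup]
      case hsup =>
        intro k hk h1 h2 ha
        by_cases hkj : k = j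
        · subst hkj; rw [hx'j] at ha; exact hB ha
        · rw [hx'k k hkj] at ha; exact zst_not_act G i k hk ha
      rw [if_neg]
      have hxm := hx'k (mOf G i) (fun h => hjm h.symm)
      have hxu := hx'k (uOf G i) (fun h => hju h.symm)
      rintro (⟨_, hl⟩ | ⟨_, ha⟩)
      · rw [hxu] at hl; exact zst_not_lact G hh hl
      · rw [hxm] at ha; exact zst_not_act G i _ (mOf_spec G hh).2 ha
    · apply ff_nonhead_eval_false G e hh
      intro k hk ha
      by_cases hkj : k = j
      · subst hkj; rw [hx'j] at ha; exact hB ha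
      · rw [hx'k k hkj] at ha; exact zst_not_act G i k hk ha

end Fwd
namespace Fwd
open SDigraph Finset Function

variable {n : ℕ}

noncomputable def lT (G : SDigraph (Fin n)) (i : Fin n) : ℤ :=
  if G.pos (uOf G i) i = true then 1 else 0
noncomputable def lF (G : SDigraph (Fin n)) (i : Fin n) : ℤ :=
  if G.pos (uOf G i) i = true then 0 else 1

lemma lT_bounds (G : SDigraph (Fin n)) (i : Fin n) : 0 ≤ lT G i ∧ lT G i ≤ 1 := by
  unfold lT; split_ifs <;> omega
lemma lF_bounds (G : SDigraph (Fin n)) (i : Fin n) : 0 ≤ lF G i ∧ lF G i ≤ 1 := by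
  unfold lF; split_ifs <;> omega
lemma lact_lT (G : SDigraph (Fin n)) (i : Fin n) : lact G i (lT G i) := by
  unfold lact lT; split_ifs <;> rfl
lemma not_lact_lF (G : SDigraph (Fin n)) (i : Fin n) : ¬ lact G i (lF G i) := by
  unfold lact lF; split_ifs <;> norm_num

lemma skip_not_c2 (G : SDigraph (Fin n)) {j : Fin n} (hs : skipC G j) : ¬ c2 G j := by
  have := hs.1; unfold c2; omega

lemma sVal_c2 (G : SDigraph (Fin n)) (e : Fin n → ℤ) {i : Fin n}
    (hc : c2 G (mOf G i)) : sVal G e i = 1 - e (mOf G i) := by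
  unfold sVal; rw [if_pos hc]
lemma sVal_skip (G : SDigraph (Fin n)) (e : Fin n → ℤ) {i : Fin n}
    (hs : skipC G (mOf G i)) : sVal G e i = 1 := by
  unfold sVal; rw [if_neg (skip_not_c2 G hs), if_pos hs]
lemma sVal_dbl (G : SDigraph (Fin n)) (e : Fin n → ℤ) {i : Fin n}
    (hc : ¬ c2 G (mOf G i)) (hs : ¬ skipC G (mOf G i)) (hd : dbl G (mOf G i) i) :
    sVal G e i = 2 := by
  unfold sVal; rw [if_neg hc, if_neg hs, if_pos hd]
lemma sVal_low (G : SDigraph (Fin n)) (e : Fin n → ℤ) {i : Fin n}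
    (hc : ¬ c2 G (mOf G i)) (hs : ¬ skipC G (mOf G i)) (hd : ¬ dbl G (mOf G i) i) :
    sVal G e i = top G (mOf G i) := by
  unfold sVal; rw [if_neg hc, if_neg hs, if_neg hd]

lemma sVal_mem (G : SDigraph (Fin n)) (e : Fin n → ℤ) {i : Fin n} (hh : head G i)
    (heB : ∀ m, ¬ bad G m → c2 G m → e m = 0 ∨ e m = 1) :
    0 ≤ sVal G e i ∧ sVal G e i ≤ top G (mOf G i) := by
  by_cases hc : c2 G (mOf G i)
  · rw [sVal_c2 G e hc, c2_top G _ hc]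
    rcases heB _ (mOf_spec G hh).1 hc with h | h <;> omega
  · by_cases hs : skipC G (mOf G i)
    · rw [sVal_skip G e hs, skip_top G hs]; omega
    · by_cases hd : dbl G (mOf G i) i
      · rw [sVal_dbl G e hc hs hd, dbl_ns_top G hd hs]; omega
      · rw [sVal_low G e hc hs hd]
        have := not_c2_top G _ hc; omega

/-- builder for head witnesses -/
lemma head_builder (G : SDigraph (Fin n)) {i : Fin n} (hh : head G i) {a b : ℤ}
    (ha0 : 0 ≤ a) (ha1 : a ≤ top G (uOf G i)) (hb0 : 0 ≤ b) (hb1 : b ≤ top G (mOf G i)) :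
    ∃ y : Fin n → ℤ, (∀ k, y k ∈ Xs G k) ∧ y (uOf G i) = a ∧ y (mOf G i) = b ∧
      (∀ k, k ≠ uOf G i → k ≠ mOf G i → y k = zst G i k) := by
  have hum := uOf_ne_mOf G hh
  refine ⟨Function.update (Function.update (zst G i) (uOf G i) a) (mOf G i) b, ?_, ?_, ?_, ?_⟩
  · intro k
    by_cases h1 : k = mOf G i
    · subst h1; rw [Function.update_self, mem_Xs]; exact ⟨hb0, hb1⟩
    · rw [Function.update_of_ne h1]
      by_cases h2 : k = uOf G i
      · subst h2; rw [Function.update_self, mem_Xs]; exact ⟨ha0, ha1⟩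
      · rw [Function.update_of_ne h2]; exact zst_mem G i k
  · rw [Function.update_of_ne hum, Function.update_self]
  · rw [Function.update_self]
  · intro k h1 h2
    rw [Function.update_of_ne h2, Function.update_of_ne h1]

lemma cmb_of_vals (G : SDigraph (Fin n)) (e : Fin n → ℤ) {i : Fin n} {y : Fin n → ℤ} :
    cmbAct G e i y ↔
      ((y (mOf G i) = sVal G e i ∧ lact G i (y (uOf G i))) ∨
       (y (mOf G i) ≠ sVal G e i ∧ act G (mOf G i) i (y (mOf G i)))) := Iff.rfl

/-- witness for the u-role at a head, positive arc -/
lemma witness_u_pos (G : SDigraph (Fin n)) (e : Fin n → ℤ) {i : Fin n} (hh : head G i)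
    (heB : ∀ m, ¬ bad G m → c2 G m → e m = 0 ∨ e m = 1)
    (hp : G.pos (uOf G i) i = true) :
    ∃ x, (∀ k, x k ∈ Xs G k) ∧ x (uOf G i) + 1 ∈ Xs G (uOf G i) ∧
      ff G e x i = 0 ∧
      ff G e (Function.update x (uOf G i) (x (uOf G i) + 1)) i = scale G i := by
  have hum := uOf_ne_mOf G hh
  have hs := sVal_mem G e hh heB
  obtain ⟨y, hmem, hyu, hym, hyz⟩ := head_builder G hh (a := 0) (b := sVal G e i)
    le_rfl (by linarith [top_ge_one G (uOf G i)]) hs.1 hs.2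
  have htopu := c2_top G _ (uOf_c2 G hh.1)
  refine ⟨y, hmem, by rw [hyu, mem_Xs]; omega, ?_, ?_⟩
  · rw [ff_head_eval G e hh (fun k hk h1 h2 ha => by
      rw [hyz k h1 h2] at ha; exact zst_not_act G i k hk ha)]
    rw [if_neg]
    rintro (⟨_, hl⟩ | ⟨hne, _⟩)
    · rw [hyu] at hl; unfold lact at hl; rw [if_pos hp] at hl; norm_num at hl
    · exact hne hym
  · have hupm : Function.update y (uOf G i) (y (uOf G i) + 1) (mOf G i) = sVal G e i := by
      rw [Function.update_of_ne (fun h => hum h.symm)]; exact hym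
    have hupu : Function.update y (uOf G i) (y (uOf G i) + 1) (uOf G i) = 1 := by
      rw [Function.update_self, hyu]; norm_num
    rw [ff_head_eval G e hh (fun k hk h1 h2 ha => by
      rw [Function.update_of_ne h1, hyz k h1 h2] at ha
      exact zst_not_act G i k hk ha)]
    rw [if_pos]
    left
    refine ⟨hupm, ?_⟩
    rw [hupu]; unfold lact; rw [if_pos hp]

/-- witness for the u-role at a head, negative arc -/
lemma witness_u_neg (G : SDigraph (Fin n)) (e : Fin n → ℤ) {i : Fin n} (hh : head G i)
    (heB : ∀ m, ¬ bad G m → c2 G m → e m = 0 ∨ e m = 1)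
    (hng : G.neg (uOf G i) i = true) (hp : ¬ G.pos (uOf G i) i = true) :
    ∃ x, (∀ k, x k ∈ Xs G k) ∧ x (uOf G i) + 1 ∈ Xs G (uOf G i) ∧
      ff G e x i = scale G i ∧
      ff G e (Function.update x (uOf G i) (x (uOf G i) + 1)) i = 0 := by
  have hum := uOf_ne_mOf G hh
  have hs := sVal_mem G e hh heB
  obtain ⟨y, hmem, hyu, hym, hyz⟩ := head_builder G hh (a := 0) (b := sVal G e i)
    le_rfl (by linarith [top_ge_one G (uOf G i)]) hs.1 hs.2
  have htopu := c2_top G _ (uOf_c2 G hh.1)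
  refine ⟨y, hmem, by rw [hyu, mem_Xs]; omega, ?_, ?_⟩
  · rw [ff_head_eval G e hh (fun k hk h1 h2 ha => by
      rw [hyz k h1 h2] at ha; exact zst_not_act G i k hk ha)]
    rw [if_pos]
    left
    refine ⟨hym, ?_⟩
    rw [hyu]; unfold lact; rw [if_neg hp]
  · have hupm : Function.update y (uOf G i) (y (uOf G i) + 1) (mOf G i) = sVal G e i := by
      rw [Function.update_of_ne (fun h => hum h.symm)]; exact hym
    have hupu : Function.update y (uOf G i) (y (uOf G i) + 1) (uOf G i) = 1 := by
      rw [Function.update_self, hyu]; norm_num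
    rw [ff_head_eval G e hh (fun k hk h1 h2 ha => by
      rw [Function.update_of_ne h1, hyz k h1 h2] at ha
      exact zst_not_act G i k hk ha)]
    rw [if_neg]
    rintro (⟨_, hl⟩ | ⟨hne, _⟩)
    · rw [hupu] at hl; unfold lact at hl; rw [if_neg hp] at hl; norm_num at hl
    · exact hne hupm

end Fwd
namespace Fwd
open SDigraph Finset Function

variable {n : ℕ}

lemma witness_m_shape (G : SDigraph (Fin n)) (e : Fin n → ℤ) {i : Fin n} (hh : head G i)
    {a b : ℤ} (ha0 : 0 ≤ a) (ha1 : a ≤ 1) (hb0 : 0 ≤ b) (hb1 : b + 1 ≤ top G (mOf G i)) :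
    ∃ x, (∀ k, x k ∈ Xs G k) ∧ x (mOf G i) + 1 ∈ Xs G (mOf G i) ∧
      ff G e x i = (if (b = sVal G e i ∧ lact G i a) ∨
        (b ≠ sVal G e i ∧ act G (mOf G i) i b) then scale G i else 0) ∧
      ff G e (Function.update x (mOf G i) (x (mOf G i) + 1)) i =
        (if (b + 1 = sVal G e i ∧ lact G i a) ∨
          (b + 1 ≠ sVal G e i ∧ act G (mOf G i) i (b + 1)) then scale G i else 0) := by
  have hum := uOf_ne_mOf G hh
  have htopu := c2_top G _ (uOf_c2 G hh.1)
  obtain ⟨y, hmem, hyu, hym, hyz⟩ := head_builder G hh (a := a) (b := b)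
    ha0 (htopu ▸ ha1) hb0 (by omega)
  have hupm : Function.update y (mOf G i) (y (mOf G i) + 1) (mOf G i) = b + 1 := by
    rw [Function.update_self, hym]
  have hupu : Function.update y (mOf G i) (y (mOf G i) + 1) (uOf G i) = a := by
    rw [Function.update_of_ne hum]; exact hyu
  refine ⟨y, hmem, by rw [hym, mem_Xs]; omega, ?_, ?_⟩
  · rw [ff_head_eval G e hh (fun k hk h1 h2 ha => by
      rw [hyz k h1 h2] at ha; exact zst_not_act G i k hk ha)]
    apply if_congr _ rfl rfl
    unfold cmbAct
    rw [hyu, hym]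
  · rw [ff_head_eval G e hh (fun k hk h1 h2 ha => by
      rw [Function.update_of_ne h2, hyz k h1 h2] at ha
      exact zst_not_act G i k hk ha)]
    apply if_congr _ rfl rfl
    unfold cmbAct
    rw [hupm, hupu]

lemma witness_m_pos (G : SDigraph (Fin n)) (e : Fin n → ℤ) {i : Fin n} (hh : head G i)
    (heB : ∀ m, ¬ bad G m → c2 G m → e m = 0 ∨ e m = 1)
    (hp : G.pos (mOf G i) i = true) :
    ∃ x, (∀ k, x k ∈ Xs G k) ∧ x (mOf G i) + 1 ∈ Xs G (mOf G i) ∧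
      ff G e x i = 0 ∧
      ff G e (Function.update x (mOf G i) (x (mOf G i) + 1)) i = scale G i := by
  have harc := (mOf_spec G hh).2
  have hnb := (mOf_spec G hh).1
  by_cases hd : dbl G (mOf G i) i
  · by_cases hsk : skipC G (mOf G i)
    · obtain ⟨x, hm, hx1, hfx, hfx'⟩ := witness_m_shape G e hh (a := lT G i) (b := 0)
        (lT_bounds G i).1 (lT_bounds G i).2 le_rfl (by rw [skip_top G hsk]; norm_num)
      refine ⟨x, hm, hx1, ?_, ?_⟩
      · rw [hfx, if_neg]
        rintro (⟨h, _⟩ | ⟨_, h⟩)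
        · rw [sVal_skip G e hsk] at h; norm_num at h
        · rw [act_eval_dbl_skip G hd hsk] at h; norm_num at h
      · rw [hfx', if_pos]
        exact Or.inl ⟨by rw [sVal_skip G e hsk]; norm_num, lact_lT G i⟩
    · obtain ⟨x, hm, hx1, hfx, hfx'⟩ := witness_m_shape G e hh (a := lT G i) (b := 1)
        (lT_bounds G i).1 (lT_bounds G i).2 (by norm_num)
        (by rw [dbl_ns_top G hd hsk]; norm_num)
      refine ⟨x, hm, hx1, ?_, ?_⟩
      · rw [hfx, if_neg]
        rintro (⟨h, _⟩ | ⟨_, h⟩)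
        · rw [sVal_dbl G e (fun hc => c2_not_dbl G hc hd) hsk hd] at h; norm_num at h
        · rw [act_eval_dbl_ns G hd hsk] at h; norm_num at h
      · rw [hfx', if_pos]
        exact Or.inl ⟨by rw [sVal_dbl G e (fun hc => c2_not_dbl G hc hd) hsk hd]; norm_num,
          lact_lT G i⟩
  · by_cases hcm : c2 G (mOf G i)
    · have htop := c2_top G _ hcm
      rcases heB _ hnb hcm with he | he
      · obtain ⟨x, hm, hx1, hfx, hfx'⟩ := witness_m_shape G e hh (a := lT G i) (b := 0)
          (lT_bounds G i).1 (lT_bounds G i).2 le_rfl (by omega)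
        refine ⟨x, hm, hx1, ?_, ?_⟩
        · rw [hfx, if_neg]
          rintro (⟨h, _⟩ | ⟨_, h⟩)
          · rw [sVal_c2 G e hcm, he] at h; norm_num at h
          · rw [act_eval_pos_c2 G hd hp hcm] at h; norm_num at h
        · rw [hfx', if_pos]
          exact Or.inl ⟨by rw [sVal_c2 G e hcm, he]; norm_num, lact_lT G i⟩
      · obtain ⟨x, hm, hx1, hfx, hfx'⟩ := witness_m_shape G e hh (a := lF G i) (b := 0)
          (lF_bounds G i).1 (lF_bounds G i).2 le_rfl (by omega)
        refine ⟨x, hm, hx1, ?_, ?_⟩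
        · rw [hfx, if_neg]
          rintro (⟨_, hl⟩ | ⟨hne, _⟩)
          · exact not_lact_lF G i hl
          · rw [sVal_c2 G e hcm, he] at hne; norm_num at hne
        · rw [hfx', if_pos]
          right
          constructor
          · rw [sVal_c2 G e hcm, he]; norm_num
          · rw [act_eval_pos_c2 G hd hp hcm]; norm_num
    · have hsk : ¬ skipC G (mOf G i) := fun hs => hd (skip_dbl G hs harc)
      have htop := not_c2_top G _ hcm
      obtain ⟨x, hm, hx1, hfx, hfx'⟩ := witness_m_shape G e hh (a := lT G i)
        (b := top G (mOf G i) - 1)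
        (lT_bounds G i).1 (lT_bounds G i).2 (by omega) (by omega)
      refine ⟨x, hm, hx1, ?_, ?_⟩
      · rw [hfx, if_neg]
        rintro (⟨h, _⟩ | ⟨_, h⟩)
        · rw [sVal_low G e hcm hsk hd] at h; omega
        · rw [act_eval_pos_nc G hd hp hcm] at h; omega
      · rw [hfx', if_pos]
        exact Or.inl ⟨by rw [sVal_low G e hcm hsk hd]; ring, lact_lT G i⟩

lemma witness_m_neg (G : SDigraph (Fin n)) (e : Fin n → ℤ) {i : Fin n} (hh : head G i)
    (heB : ∀ m, ¬ bad G m → c2 G m → e m = 0 ∨ e m = 1)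
    (hn : G.neg (mOf G i) i = true) :
    ∃ x, (∀ k, x k ∈ Xs G k) ∧ x (mOf G i) + 1 ∈ Xs G (mOf G i) ∧
      ff G e x i = scale G i ∧
      ff G e (Function.update x (mOf G i) (x (mOf G i) + 1)) i = 0 := by
  have harc := (mOf_spec G hh).2
  have hnb := (mOf_spec G hh).1
  by_cases hd : dbl G (mOf G i) i
  · by_cases hsk : skipC G (mOf G i)
    · obtain ⟨x, hm, hx1, hfx, hfx'⟩ := witness_m_shape G e hh (a := lT G i) (b := 1)
        (lT_bounds G i).1 (lT_bounds G i).2 (by norm_num) (by rw [skip_top G hsk]; norm_num)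
      refine ⟨x, hm, hx1, ?_, ?_⟩
      · rw [hfx, if_pos]
        exact Or.inl ⟨by rw [sVal_skip G e hsk], lact_lT G i⟩
      · rw [hfx', if_neg]
        rintro (⟨h, _⟩ | ⟨_, h⟩)
        · rw [sVal_skip G e hsk] at h; norm_num at h
        · rw [act_eval_dbl_skip G hd hsk] at h; norm_num at h
    · obtain ⟨x, hm, hx1, hfx, hfx'⟩ := witness_m_shape G e hh (a := lT G i) (b := 2)
        (lT_bounds G i).1 (lT_bounds G i).2 (by norm_num)
        (by rw [dbl_ns_top G hd hsk]; norm_num)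
      refine ⟨x, hm, hx1, ?_, ?_⟩
      · rw [hfx, if_pos]
        exact Or.inl ⟨by rw [sVal_dbl G e (fun hc => c2_not_dbl G hc hd) hsk hd],
          lact_lT G i⟩
      · rw [hfx', if_neg]
        rintro (⟨h, _⟩ | ⟨_, h⟩)
        · rw [sVal_dbl G e (fun hc => c2_not_dbl G hc hd) hsk hd] at h; norm_num at h
        · rw [act_eval_dbl_ns G hd hsk] at h; norm_num at h
  · have hp : ¬ G.pos (mOf G i) i = true := fun hpos => hd ⟨hpos, hn⟩
    by_cases hcm : c2 G (mOf G i)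
    · have htop := c2_top G _ hcm
      rcases heB _ hnb hcm with he | he
      · obtain ⟨x, hm, hx1, hfx, hfx'⟩ := witness_m_shape G e hh (a := lF G i) (b := 0)
          (lF_bounds G i).1 (lF_bounds G i).2 le_rfl (by omega)
        refine ⟨x, hm, hx1, ?_, ?_⟩
        · rw [hfx, if_pos]
          right
          constructor
          · rw [sVal_c2 G e hcm, he]; norm_num
          · rw [act_eval_neg_c2 G hd hp hcm]
        · rw [hfx', if_neg]
          rintro (⟨_, hl⟩ | ⟨_, h⟩)
          · exact not_lact_lF G i hl
          · rw [act_eval_neg_c2 G hd hp hcm] at h; norm_num at h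
      · obtain ⟨x, hm, hx1, hfx, hfx'⟩ := witness_m_shape G e hh (a := lT G i) (b := 0)
          (lT_bounds G i).1 (lT_bounds G i).2 le_rfl (by omega)
        refine ⟨x, hm, hx1, ?_, ?_⟩
        · rw [hfx, if_pos]
          exact Or.inl ⟨by rw [sVal_c2 G e hcm, he]; norm_num, lact_lT G i⟩
        · rw [hfx', if_neg]
          rintro (⟨h, _⟩ | ⟨_, h⟩)
          · rw [sVal_c2 G e hcm, he] at h; norm_num at h
          · rw [act_eval_neg_c2 G hd hp hcm] at h; norm_num at h
    · have hsk : ¬ skipC G (mOf G i) := fun hs => hd (skip_dbl G hs harc)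
      have htop := not_c2_top G _ hcm
      obtain ⟨x, hm, hx1, hfx, hfx'⟩ := witness_m_shape G e hh (a := lF G i)
        (b := top G (mOf G i) - 1)
        (lF_bounds G i).1 (lF_bounds G i).2 (by omega) (by omega)
      refine ⟨x, hm, hx1, ?_, ?_⟩
      · rw [hfx, if_pos]
        right
        constructor
        · rw [sVal_low G e hcm hsk hd]; omega
        · rw [act_eval_neg_nc G hd hp hcm]
      · rw [hfx', if_neg]
        rintro (⟨_, hl⟩ | ⟨hne, _⟩)
        · exact not_lact_lF G i hl
        · rw [sVal_low G e hcm hsk hd] at hne; omega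

lemma witness_generic_pos (G : SDigraph (Fin n)) (e : Fin n → ℤ) {j i : Fin n}
    (hp : G.pos j i = true) (hside : ¬ head G i ∨ (j ≠ uOf G i ∧ j ≠ mOf G i)) :
    ∃ x, (∀ k, x k ∈ Xs G k) ∧ x j + 1 ∈ Xs G j ∧
      ff G e x i = 0 ∧ ff G e (Function.update x j (x j + 1)) i = scale G i := by
  have harc : G.arc j i := Or.inl hp
  by_cases hd : dbl G j i
  · by_cases hsk : skipC G j
    · exact witness_core G e harc hside (p := 0) le_rfl (by rw [skip_top G hsk]; norm_num)
        (by rw [act_eval_dbl_skip G hd hsk]; norm_num)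
        (by rw [act_eval_dbl_skip G hd hsk]; norm_num)
    · exact witness_core G e harc hside (p := 1) (by norm_num)
        (by rw [dbl_ns_top G hd hsk]; norm_num)
        (by rw [act_eval_dbl_ns G hd hsk]; norm_num)
        (by rw [act_eval_dbl_ns G hd hsk]; norm_num)
  · by_cases hc : c2 G j
    · exact witness_core G e harc hside (p := 0) le_rfl (by rw [c2_top G j hc]; norm_num)
        (by rw [act_eval_pos_c2 G hd hp hc]; norm_num)
        (by rw [act_eval_pos_c2 G hd hp hc]; norm_num)
    · have htop := not_c2_top G j hc
      exact witness_core G e harc hside (p := top G j - 1) (by omega) (by omega)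
        (by rw [act_eval_pos_nc G hd hp hc]; omega)
        (by rw [act_eval_pos_nc G hd hp hc]; omega)
lemma witness_generic_neg (G : SDigraph (Fin n)) (e : Fin n → ℤ) {j i : Fin n}
    (hn : G.neg j i = true) (hside : ¬ head G i ∨ (j ≠ uOf G i ∧ j ≠ mOf G i)) :
    ∃ x, (∀ k, x k ∈ Xs G k) ∧ x j + 1 ∈ Xs G j ∧
      ff G e x i = scale G i ∧ ff G e (Function.update x j (x j + 1)) i = 0 := by
  have harc : G.arc j i := Or.inr hn
  by_cases hd : dbl G j i
  · by_cases hsk : skipC G j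
    · exact witness_core' G e harc hside (p := 1) (by norm_num)
        (by rw [skip_top G hsk]; norm_num)
        (by rw [act_eval_dbl_skip G hd hsk])
        (by rw [act_eval_dbl_skip G hd hsk]; norm_num)
    · exact witness_core' G e harc hside (p := 2) (by norm_num)
        (by rw [dbl_ns_top G hd hsk]; norm_num)
        (by rw [act_eval_dbl_ns G hd hsk])
        (by rw [act_eval_dbl_ns G hd hsk]; norm_num)
  · have hp : ¬ G.pos j i = true := fun hpos => hd ⟨hpos, hn⟩
    by_cases hc : c2 G j
    · exact witness_core' G e harc hside (p := 0) le_rfl (by rw [c2_top G j hc]; norm_num)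
        (by rw [act_eval_neg_c2 G hd hp hc])
        (by rw [act_eval_neg_c2 G hd hp hc]; norm_num)
    · have htop := not_c2_top G j hc
      exact witness_core' G e harc hside (p := top G j - 1) (by omega) (by omega)
        (by rw [act_eval_neg_nc G hd hp hc])
        (by rw [act_eval_neg_nc G hd hp hc]; omega)

theorem exact_pos (G : SDigraph (Fin n)) (e : Fin n → ℤ)
    (heB : ∀ m, ¬ bad G m → c2 G m → e m = 0 ∨ e m = 1) (j i : Fin n) :
    G.pos j i = true ↔ ∃ x, (∀ k, x k ∈ Xs G k) ∧ x j + 1 ∈ Xs G j ∧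
      ff G e x i < ff G e (Function.update x j (x j + 1)) i := by
  constructor
  · intro hp
    by_cases hh : head G i
    · by_cases hjm : j = mOf G i
      · subst hjm
        obtain ⟨x, h1, h2, h3, h4⟩ := witness_m_pos G e hh heB hp
        exact ⟨x, h1, h2, by rw [h3, h4]; exact scale_pos G i⟩
      · by_cases hju : j = uOf G i
        · subst hju
          obtain ⟨x, h1, h2, h3, h4⟩ := witness_u_pos G e hh heB hp
          exact ⟨x, h1, h2, by rw [h3, h4]; exact scale_pos G i⟩
        · obtain ⟨x, h1, h2, h3, h4⟩ := witness_generic_pos G e hp (Or.inr ⟨hju, hjm⟩)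
          exact ⟨x, h1, h2, by rw [h3, h4]; exact scale_pos G i⟩
    · obtain ⟨x, h1, h2, h3, h4⟩ := witness_generic_pos G e hp (Or.inl hh)
      exact ⟨x, h1, h2, by rw [h3, h4]; exact scale_pos G i⟩
  · intro hex
    by_contra hp
    obtain ⟨x, hx, hx1, hlt⟩ := hex
    have := ff_mono_down G e hp hx hx1
    omega

theorem exact_neg (G : SDigraph (Fin n)) (e : Fin n → ℤ)
    (heB : ∀ m, ¬ bad G m → c2 G m → e m = 0 ∨ e m = 1) (j i : Fin n) :
    G.neg j i = true ↔ ∃ x, (∀ k, x k ∈ Xs G k) ∧ x j + 1 ∈ Xs G j ∧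
      ff G e (Function.update x j (x j + 1)) i < ff G e x i := by
  constructor
  · intro hn
    by_cases hh : head G i
    · by_cases hjm : j = mOf G i
      · subst hjm
        obtain ⟨x, h1, h2, h3, h4⟩ := witness_m_neg G e hh heB hn
        exact ⟨x, h1, h2, by rw [h3, h4]; exact scale_pos G i⟩
      · by_cases hju : j = uOf G i
        · subst hju
          by_cases hp : G.pos (uOf G i) i = true
          · exact absurd (⟨hp, hn⟩ : dbl G (uOf G i) i) (c2_not_dbl G (uOf_c2 G hh.1))
          · obtain ⟨x, h1, h2, h3, h4⟩ := witness_u_neg G e hh heB hn hp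
            exact ⟨x, h1, h2, by rw [h3, h4]; exact scale_pos G i⟩
        · obtain ⟨x, h1, h2, h3, h4⟩ := witness_generic_neg G e hn (Or.inr ⟨hju, hjm⟩)
          exact ⟨x, h1, h2, by rw [h3, h4]; exact scale_pos G i⟩
    · obtain ⟨x, h1, h2, h3, h4⟩ := witness_generic_neg G e hn (Or.inl hh)
      exact ⟨x, h1, h2, by rw [h3, h4]; exact scale_pos G i⟩
  · intro hex
    by_contra hn
    obtain ⟨x, hx, hx1, hlt⟩ := hex
    have := ff_mono_up G e heB hn hx hx1
    omega

end Fwd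
namespace Fwd
open SDigraph Finset Function

variable {n : ℕ}

def loud (G : SDigraph (Fin n)) (i : Fin n) : Prop :=
  ∃ j, ¬ c2 G j ∧ G.neg j i = true ∧ ¬ dbl G j i

def pR (G : SDigraph (Fin n)) (j i : Fin n) : Prop :=
  ¬ loud G i ∧ G.arc j i ∧
    ((head G i ∧ (j = mOf G i ∨ (c2 G j ∧ j ≠ uOf G i))) ∨ (¬ head G i ∧ c2 G j))

lemma c2_arc_out1 (G : SDigraph (Fin n)) {j i : Fin n} (hc : c2 G j) (ha : G.arc j i) :
    G.outdeg j = 1 := by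
  have := arc_outdeg_pos G ha; unfold c2 at hc; omega

lemma c2_scale (G : SDigraph (Fin n)) {j : Fin n} (hc : c2 G j) : scale G j = 1 := by
  unfold scale; rw [if_neg (fun hs => skip_not_c2 G hs hc)]

lemma pR_bad (G : SDigraph (Fin n)) {j i : Fin n} (h : pR G j i) (hb : bad G j) :
    bad G i ∧ i = nxt G j ∧ ¬ head G i := by
  obtain ⟨hl, harc, hbr⟩ := h
  have hi : i = nxt G j := arc_nxt G hb.1 harc
  have hbi : bad G i := by rw [hi]; exact bad_nxt G hb
  refine ⟨hbi, hi, ?_⟩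
  intro hh
  rcases hbr with ⟨_, (hjm | ⟨_, hju⟩)⟩ | ⟨hnh, _⟩
  · exact (mOf_spec G hh).1 (hjm ▸ hb)
  · exact hju (uOf_uniq G hbi hb hi.symm)
  · exact hnh hh

lemma pR_chain_bad (G : SDigraph (Fin n)) {a b : Fin n}
    (htg : Relation.TransGen (pR G) a b) (hb : bad G a) :
    bad G b ∧ ∃ t, (nxt G)^[t + 1] a = b ∧ ∀ s ≤ t, ¬ head G ((nxt G)^[s + 1] a) := by
  induction htg with
  | single h =>
    obtain ⟨hbb, he, hnh⟩ := pR_bad G h hb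
    refine ⟨hbb, 0, by simpa using he.symm, ?_⟩
    intro s hs
    interval_cases s
    simpa using he ▸ hnh
  | tail htg' hstep ih =>
    obtain ⟨hbb, t, he, hnh⟩ := ih
    obtain ⟨hbc, hec, hnc⟩ := pR_bad G hstep hbb
    refine ⟨hbc, t + 1, ?_, ?_⟩
    · rw [Function.iterate_succ_apply', he, ← hec]
    · intro s hs
      rcases Nat.lt_or_ge s (t + 1) with h | h
      · exact hnh s (by omega)
      · have hst : s = t + 1 := by omega
        subst hst
        rw [Function.iterate_succ_apply', he, ← hec]
        exact hnc

lemma pR_chain_nonbad (G : SDigraph (Fin n)) {a b : Fin n}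
    (htg : Relation.TransGen (pR G) a b) :
    bad G b ∨ (G.outdeg a = 1 ∧ ∃ t, (nxt G)^[t + 1] a = b) := by
  induction htg with
  | @single b h =>
    by_cases hh : head G b
    · exact Or.inl (head_bad G hh)
    · obtain ⟨_, harc, hbr⟩ := h
      rcases hbr with ⟨hhb, _⟩ | ⟨_, hc2⟩
      · exact absurd hhb hh
      · have hout := c2_arc_out1 G hc2 harc
        exact Or.inr ⟨hout, 0, by simpa using (arc_nxt G hout harc).symm⟩
  | @tail b' c htg' hstep ih =>
    rcases ih with hbb | ⟨hout, t, he⟩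
    · exact Or.inl (pR_bad G hstep hbb).1
    · by_cases hh : head G c
      · exact Or.inl (head_bad G hh)
      · obtain ⟨_, harc, hbr⟩ := hstep
        rcases hbr with ⟨hhb, _⟩ | ⟨_, hc2⟩
        · exact absurd hhb hh
        · have houtb := c2_arc_out1 G hc2 harc
          refine Or.inr ⟨hout, t + 1, ?_⟩
          rw [Function.iterate_succ_apply', he]
          exact (arc_nxt G houtb harc).symm

lemma iter_period (G : SDigraph (Fin n)) {a : Fin n} {p : ℕ}
    (hp : (nxt G)^[p] a = a) (q r : ℕ) : (nxt G)^[q * p + r] a = (nxt G)^[r] a := by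
  induction q with
  | zero => simp
  | succ q ih =>
    have : (q + 1) * p + r = (q * p + r) + p := by ring
    rw [this, Function.iterate_add_apply, hp, ih]

lemma pR_no_cycle (G : SDigraph (Fin n)) (hconn : G.Connected)
    (hnc : ¬ G.IsSignedCycleGraph) (a : Fin n) : ¬ Relation.TransGen (pR G) a a := by
  intro htg
  by_cases hb : bad G a
  · obtain ⟨_, t, hta, hnh⟩ := pR_chain_bad G htg hb
    obtain ⟨w, s, hsw, hw⟩ := head_exists G hconn hnc hb
    -- reduce s modulo t+1
    have hmod : (nxt G)^[s % (t + 1)] a = w := by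
      conv_rhs => rw [← hsw]
      have hdm : s / (t + 1) * (t + 1) + s % (t + 1) = s := Nat.div_add_mod' s (t + 1)
      rw [show (nxt G)^[s] a = (nxt G)^[s / (t + 1) * (t + 1) + s % (t + 1)] a by rw [hdm]]
      rw [iter_period G hta]
    rcases Nat.eq_zero_or_pos (s % (t + 1)) with h0 | h0
    · rw [h0] at hmod
      simp at hmod
      -- w = a, but a = nxt^[t+1] a is non-head by hnh at s := t
      have := hnh t le_rfl
      rw [hta, hmod] at this
      exact this hw
    · have hr : s % (t + 1) - 1 ≤ t := by
        have := Nat.mod_lt s (show 0 < t + 1 by omega)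
        omega
      have := hnh (s % (t + 1) - 1) hr
      rw [show s % (t + 1) - 1 + 1 = s % (t + 1) by omega, hmod] at this
      exact this hw
  · rcases pR_chain_nonbad G htg with hbb | ⟨hout, t, he⟩
    · exact hb hbb
    · exact hb ⟨hout, t, he⟩

lemma pR_wf (G : SDigraph (Fin n)) (hconn : G.Connected)
    (hnc : ¬ G.IsSignedCycleGraph) : WellFounded (pR G) := by
  have hirr : ∀ a, ¬ Relation.TransGen (pR G) a a := pR_no_cycle G hconn hnc
  have : IsIrrefl (Fin n) (Relation.TransGen (pR G)) := ⟨hirr⟩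
  have hwf : WellFounded (Relation.TransGen (pR G)) :=
    Finite.wellFounded_of_trans_of_irrefl _
  exact Subrelation.wf (fun h => Relation.TransGen.single h) hwf

-- the plain parent relation (used for fPlain stabilisation)
def pRP (G : SDigraph (Fin n)) (j i : Fin n) : Prop :=
  ¬ loud G i ∧ G.arc j i ∧ c2 G j ∧ ¬ bad G i

lemma pRP_no_cycle (G : SDigraph (Fin n)) (a : Fin n) :
    ¬ Relation.TransGen (pRP G) a a := by
  intro htg
  have hchain : ∀ b, Relation.TransGen (pRP G) a b →
      (¬ bad G b) ∧ G.outdeg a = 1 ∧ ∃ t, (nxt G)^[t + 1] a = b := by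
    intro b htg'
    induction htg' with
    | single h =>
      obtain ⟨_, harc, hc2, hnb⟩ := h
      have hout := c2_arc_out1 G hc2 harc
      exact ⟨hnb, hout, 0, by simpa using (arc_nxt G hout harc).symm⟩
    | tail htg'' hstep ih =>
      obtain ⟨hnb', hout, t, he⟩ := ih
      obtain ⟨_, harc, hc2, hnb⟩ := hstep
      have houtb := c2_arc_out1 G hc2 harc
      refine ⟨hnb, hout, t + 1, ?_⟩
      rw [Function.iterate_succ_apply', he]
      exact (arc_nxt G houtb harc).symm
  obtain ⟨hnb, hout, t, he⟩ := hchain a htg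
  exact hnb ⟨hout, t, he⟩

lemma pRP_wf (G : SDigraph (Fin n)) : WellFounded (pRP G) := by
  have : IsIrrefl (Fin n) (Relation.TransGen (pRP G)) := ⟨pRP_no_cycle G⟩
  have hwf : WellFounded (Relation.TransGen (pRP G)) :=
    Finite.wellFounded_of_trans_of_irrefl _
  exact Subrelation.wf (fun h => Relation.TransGen.single h) hwf

-- activity on box states
lemma box_not_act_nonc2 (G : SDigraph (Fin n)) {i j : Fin n} (hnl : ¬ loud G i)
    (harc : G.arc j i) (hnc2 : ¬ c2 G j) {v : ℤ} (hv : v = 0 ∨ v = scale G j) :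
    ¬ act G j i v := by
  intro hact
  by_cases hd : dbl G j i
  · by_cases hsk : skipC G j
    · rw [act_eval_dbl_skip G hd hsk] at hact
      unfold scale at hv; rw [if_pos hsk] at hv
      omega
    · rw [act_eval_dbl_ns G hd hsk] at hact
      unfold scale at hv; rw [if_neg hsk] at hv
      omega
  · by_cases hp : G.pos j i = true
    · have hsk : ¬ skipC G j := fun hs => hd (skip_dbl G hs harc)
      rw [act_eval_pos_nc G hd hp hnc2] at hact
      unfold scale at hv; rw [if_neg hsk] at hv
      have := not_c2_top G j hnc2
      omega
    · exact hnl ⟨j, hnc2, harc.resolve_left hp, hd⟩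

lemma loud_act (G : SDigraph (Fin n)) {i : Fin n} (hl : loud G i) :
    ∃ j, G.arc j i ∧ ¬ c2 G j ∧ ∀ v : ℤ, v = 0 ∨ v = scale G j → act G j i v := by
  obtain ⟨j, hnc2, hneg, hnd⟩ := hl
  have harc : G.arc j i := Or.inr hneg
  have hp : ¬ G.pos j i = true := fun hp => hnd ⟨hp, hneg⟩
  have hsk : ¬ skipC G j := fun hs => hnd (skip_dbl G hs harc)
  refine ⟨j, harc, hnc2, ?_⟩
  intro v hv
  rw [act_eval_neg_nc G hnd hp hnc2]
  unfold scale at hv; rw [if_neg hsk] at hv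
  have := not_c2_top G j hnc2
  omega

end Fwd
namespace Fwd
open SDigraph Finset Function

variable {n : ℕ}

lemma fPlain_memBox (G : SDigraph (Fin n)) (x : Fin n → ℤ) : memBox G (fPlain G x) :=
  fun i => fPlain_range G x i

lemma iter_box_plain (G : SDigraph (Fin n)) {x : Fin n → ℤ} (hx : memBox G x) (t : ℕ) :
    memBox G ((fPlain G)^[t] x) := by
  induction t with
  | zero => exact hx
  | succ t ih => rw [Function.iterate_succ_apply']; exact fPlain_memBox G _

lemma iter_box_ff (G : SDigraph (Fin n)) (e : Fin n → ℤ) {x : Fin n → ℤ}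
    (hx : memBox G x) (t : ℕ) : memBox G ((ff G e)^[t] x) := by
  induction t with
  | zero => exact hx
  | succ t ih => rw [Function.iterate_succ_apply']; exact ff_memBox G e _

lemma loud_plain_eval (G : SDigraph (Fin n)) {i : Fin n} (hl : loud G i)
    {y : Fin n → ℤ} (hy : memBox G y) : fPlain G y i = scale G i := by
  obtain ⟨j, harc, hnc2, hact⟩ := loud_act G hl
  unfold fPlain
  rw [if_pos ⟨j, harc, hact _ (hy j)⟩]

theorem stabPlain (G : SDigraph (Fin n)) : ∀ i, ¬ bad G i →
    ∃ v, (v = 0 ∨ v = scale G i) ∧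
      ∀ x, memBox G x → ∃ T, ∀ t, T ≤ t → (fPlain G)^[t] x i = v := by
  intro i
  induction i using (pRP_wf G).induction with
  | _ i IH =>
  intro hnb
  by_cases hl : loud G i
  · refine ⟨scale G i, Or.inr rfl, ?_⟩
    intro x hx
    refine ⟨1, ?_⟩
    intro t ht
    obtain ⟨t', rfl⟩ : ∃ t', t = t' + 1 := ⟨t - 1, by omega⟩
    rw [Function.iterate_succ_apply']
    exact loud_plain_eval G hl (iter_box_plain G hx t')
  · classical
    have hIH : ∀ j, pRP G j i → ∃ v, (v = 0 ∨ v = scale G j) ∧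
        ∀ x, memBox G x → ∃ T, ∀ t, T ≤ t → (fPlain G)^[t] x j = v :=
      fun j h => IH j h (arc_to_nonbad G hnb h.2.1)
    set vP : Fin n → ℤ :=
      fun j => if h : pRP G j i then Classical.choose (hIH j h) else 0 with hvPdef
    have hvP : ∀ j (h : pRP G j i), (vP j = 0 ∨ vP j = scale G j) ∧
        ∀ x, memBox G x → ∃ T, ∀ t, T ≤ t → (fPlain G)^[t] x j = vP j := by
      intro j h
      have := Classical.choose_spec (hIH j h)
      rw [hvPdef]
      simpa [dif_pos h] using this
    have hvP_box : memBox G vP := by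
      intro j
      by_cases h : pRP G j i
      · exact (hvP j h).1
      · left; rw [hvPdef]; simp [dif_neg h]
    have hdet : ∀ y, memBox G y → (∀ j, pRP G j i → y j = vP j) →
        fPlain G y i = fPlain G vP i := by
      intro y hy hagree
      unfold fPlain
      apply if_congr _ rfl rfl
      constructor
      · rintro ⟨j, harc, hact⟩
        by_cases hc2 : c2 G j
        · have hp : pRP G j i := ⟨hl, harc, hc2, hnb⟩
          exact ⟨j, harc, by rw [← hagree j hp]; exact hact⟩
        · exact absurd hact (box_not_act_nonc2 G hl harc hc2 (hy j))
      · rintro ⟨j, harc, hact⟩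
        by_cases hc2 : c2 G j
        · have hp : pRP G j i := ⟨hl, harc, hc2, hnb⟩
          exact ⟨j, harc, by rw [hagree j hp]; exact hact⟩
        · exact absurd hact (box_not_act_nonc2 G hl harc hc2 (hvP_box j))
    refine ⟨fPlain G vP i, fPlain_range G vP i, ?_⟩
    intro x hx
    have hT : ∀ j, ∃ Tj : ℕ, ∀ t, Tj ≤ t → (pRP G j i → (fPlain G)^[t] x j = vP j) := by
      intro j
      by_cases h : pRP G j i
      · obtain ⟨T, hT⟩ := (hvP j h).2 x hx
        exact ⟨T, fun t ht _ => hT t ht⟩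
      · exact ⟨0, fun t _ hp => absurd hp h⟩
    choose Tf hTf using hT
    refine ⟨(Finset.univ.sup Tf) + 1, ?_⟩
    intro t ht
    obtain ⟨t', rfl⟩ : ∃ t', t = t' + 1 := ⟨t - 1, by omega⟩
    rw [Function.iterate_succ_apply']
    apply hdet _ (iter_box_plain G hx t')
    intro j hp
    refine hTf j t' ?_ hp
    have := Finset.le_sup (f := Tf) (Finset.mem_univ j)
    omega

noncomputable def eV (G : SDigraph (Fin n)) : Fin n → ℤ :=
  fun m => if h : ¬ bad G m then Classical.choose (stabPlain G m h) else 0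

lemma eV_spec (G : SDigraph (Fin n)) {m : Fin n} (h : ¬ bad G m) :
    (eV G m = 0 ∨ eV G m = scale G m) ∧
      ∀ x, memBox G x → ∃ T, ∀ t, T ≤ t → (fPlain G)^[t] x m = eV G m := by
  unfold eV
  rw [dif_pos h]
  exact Classical.choose_spec (stabPlain G m h)

lemma heB_eV (G : SDigraph (Fin n)) : ∀ m, ¬ bad G m → c2 G m →
    eV G m = 0 ∨ eV G m = 1 := by
  intro m h hc
  have := (eV_spec G h).1
  rw [c2_scale G hc] at this
  exact this

end Fwd
namespace Fwd
open SDigraph Finset Function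

variable {n : ℕ}

lemma ff_head_def (G : SDigraph (Fin n)) (e : Fin n → ℤ) {i : Fin n} (hh : head G i)
    (y : Fin n → ℤ) : ff G e y i =
      if (cmbAct G e i y ∨ ∃ j, G.arc j i ∧ j ≠ uOf G i ∧ j ≠ mOf G i ∧ act G j i (y j))
      then scale G i else 0 := by
  unfold ff; rw [if_pos hh]

lemma loud_act' (G : SDigraph (Fin n)) {i : Fin n} (hl : loud G i) :
    ∃ j, G.arc j i ∧ ¬ c2 G j ∧ ¬ skipC G j ∧ ¬ dbl G j i ∧
      (∀ v : ℤ, v = 0 ∨ v = scale G j → act G j i v) := by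
  obtain ⟨j, hnc2, hneg, hnd⟩ := hl
  have harc : G.arc j i := Or.inr hneg
  have hp : ¬ G.pos j i = true := fun hp => hnd ⟨hp, hneg⟩
  have hsk : ¬ skipC G j := fun hs => hnd (skip_dbl G hs harc)
  refine ⟨j, harc, hnc2, hsk, hnd, ?_⟩
  intro v hv
  rw [act_eval_neg_nc G hnd hp hnc2]
  unfold scale at hv; rw [if_neg hsk] at hv
  have := not_c2_top G j hnc2
  omega

lemma loud_ff_eval (G : SDigraph (Fin n)) {i : Fin n} (hl : loud G i)
    {y : Fin n → ℤ} (hy : memBox G y) : ff G (eV G) y i = scale G i := by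
  obtain ⟨j, harc, hnc2, hsk, hnd, hact⟩ := loud_act' G hl
  by_cases hh : head G i
  · unfold ff
    rw [if_pos hh, if_pos]
    by_cases hjm : j = mOf G i
    · left
      unfold cmbAct
      right
      constructor
      · subst hjm
        rw [sVal_low G (eV G) hnc2 hsk hnd]
        have h1 : scale G (mOf G i) = 1 := by unfold scale; rw [if_neg hsk]
        have h2 := not_c2_top G (mOf G i) hnc2
        rcases hy (mOf G i) with h | h <;> rw [h] <;> [omega; (rw [h1]; omega)]
      · subst hjm
        exact hact _ (hy (mOf G i))
    · right
      refine ⟨j, harc, ?_, hjm, hact _ (hy j)⟩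
      intro hju
      exact hnc2 (hju ▸ uOf_c2 G hh.1)
  · rw [ff_not_head G _ _ hh]
    exact loud_plain_eval G hl hy

lemma eV_ne_sVal (G : SDigraph (Fin n)) {i : Fin n} (hh : head G i) :
    eV G (mOf G i) ≠ sVal G (eV G) i := by
  have hnb := (mOf_spec G hh).1
  have hbox := (eV_spec G hnb).1
  by_cases hc : c2 G (mOf G i)
  · rw [sVal_c2 G _ hc]
    rw [c2_scale G hc] at hbox
    omega
  · by_cases hsk : skipC G (mOf G i)
    · rw [sVal_skip G _ hsk]
      unfold scale at hbox; rw [if_pos hsk] at hbox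
      omega
    · have h1 : scale G (mOf G i) = 1 := by unfold scale; rw [if_neg hsk]
      rw [h1] at hbox
      by_cases hd : dbl G (mOf G i) i
      · rw [sVal_dbl G _ hc hsk hd]; omega
      · rw [sVal_low G _ hc hsk hd]
        have := not_c2_top G _ hc; omega

theorem stabF (G : SDigraph (Fin n)) (hconn : G.Connected)
    (hnc : ¬ G.IsSignedCycleGraph) : ∀ i, ∃ v, ∀ x, memBox G x →
      ∃ T, ∀ t, T ≤ t → (ff G (eV G))^[t] x i = v := by
  intro i
  induction i using (pR_wf G hconn hnc).induction with
  | _ i IH =>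
  by_cases hl : loud G i
  · refine ⟨scale G i, fun x hx => ⟨1, fun t ht => ?_⟩⟩
    obtain ⟨t', rfl⟩ : ∃ t', t = t' + 1 := ⟨t - 1, by omega⟩
    rw [Function.iterate_succ_apply']
    exact loud_ff_eval G hl (iter_box_ff G _ hx t')
  · by_cases hh : head G i
    · -- head case
      have hnbm := (mOf_spec G hh).1
      have hespec := (eV_spec G hnbm).2
      classical
      set P : Fin n → Prop :=
        fun j => G.arc j i ∧ c2 G j ∧ j ≠ uOf G i ∧ j ≠ mOf G i with hPdef
      have hPpR : ∀ j, P j → pR G j i :=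
        fun j hj => ⟨hl, hj.1, Or.inl ⟨hh, Or.inr ⟨hj.2.1, hj.2.2.1⟩⟩⟩
      set vP : Fin n → ℤ :=
        fun j => if h : P j then Classical.choose (IH j (hPpR j h)) else 0 with hvPdef
      have hvP : ∀ j (h : P j), ∀ x, memBox G x →
          ∃ T, ∀ t, T ≤ t → (ff G (eV G))^[t] x j = vP j := by
        intro j h
        have := Classical.choose_spec (IH j (hPpR j h))
        rw [hvPdef]
        simpa [dif_pos h] using this
      refine ⟨if (eV G (mOf G i) ≠ sVal G (eV G) i ∧ act G (mOf G i) i (eV G (mOf G i)))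
          ∨ ∃ j, P j ∧ act G j i (vP j) then scale G i else 0, ?_⟩
      intro x hx
      obtain ⟨Tm, hTm⟩ := hespec x hx
      have hTm' : ∀ t, Tm ≤ t → (ff G (eV G))^[t] x (mOf G i) = eV G (mOf G i) := by
        intro t ht
        rw [traj_eq_plain G (eV G) x t (mOf G i) hnbm]
        exact hTm t ht
      have hT : ∀ j, ∃ Tj : ℕ, ∀ t, Tj ≤ t →
          (P j → (ff G (eV G))^[t] x j = vP j) := by
        intro j
        by_cases h : P j
        · obtain ⟨T, hT⟩ := hvP j h x hx
          exact ⟨T, fun t ht _ => hT t ht⟩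
        · exact ⟨0, fun t _ hp => absurd hp h⟩
      choose Tf hTf using hT
      refine ⟨max Tm (Finset.univ.sup Tf) + 1, ?_⟩
      intro t ht
      obtain ⟨t', rfl⟩ : ∃ t', t = t' + 1 := ⟨t - 1, by omega⟩
      rw [Function.iterate_succ_apply']
      have hy : memBox G ((ff G (eV G))^[t'] x) := iter_box_ff G _ hx t'
      have hym : (ff G (eV G))^[t'] x (mOf G i) = eV G (mOf G i) :=
        hTm' t' (by omega)
      have hyP : ∀ j, P j → (ff G (eV G))^[t'] x j = vP j := by
        intro j hp
        refine hTf j t' ?_ hp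
        have := Finset.le_sup (f := Tf) (Finset.mem_univ j)
        omega
      rw [ff_head_def G (eV G) hh]
      apply if_congr _ rfl rfl
      constructor
      · rintro (hc | ⟨j, harc, hju, hjm, hact⟩)
        · left
          rcases hc with ⟨heq, _⟩ | ⟨hne, hact⟩
          · rw [hym] at heq
            exact absurd heq (eV_ne_sVal G hh)
          · rw [hym] at hne hact
            exact ⟨hne, hact⟩
        · right
          by_cases hc2 : c2 G j
          · have hp : P j := ⟨harc, hc2, hju, hjm⟩
            exact ⟨j, hp, by rw [← hyP j hp]; exact hact⟩
          · exact absurd hact (box_not_act_nonc2 G hl harc hc2 (hy j))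
      · rintro (⟨hne, hact⟩ | ⟨j, hp, hact⟩)
        · left
          unfold cmbAct
          right
          rw [hym]
          exact ⟨hne, hact⟩
        · right
          exact ⟨j, hp.1, hp.2.2.1, hp.2.2.2, by rw [hyP j hp]; exact hact⟩
    · -- non-head, non-loud
      classical
      set P : Fin n → Prop := fun j => G.arc j i ∧ c2 G j with hPdef
      have hPpR : ∀ j, P j → pR G j i :=
        fun j hj => ⟨hl, hj.1, Or.inr ⟨hh, hj.2⟩⟩
      set vP : Fin n → ℤ :=
        fun j => if h : P j then Classical.choose (IH j (hPpR j h)) else 0 with hvPdef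
      have hvP : ∀ j (h : P j), ∀ x, memBox G x →
          ∃ T, ∀ t, T ≤ t → (ff G (eV G))^[t] x j = vP j := by
        intro j h
        have := Classical.choose_spec (IH j (hPpR j h))
        rw [hvPdef]
        simpa [dif_pos h] using this
      refine ⟨if ∃ j, P j ∧ act G j i (vP j) then scale G i else 0, ?_⟩
      intro x hx
      have hT : ∀ j, ∃ Tj : ℕ, ∀ t, Tj ≤ t →
          (P j → (ff G (eV G))^[t] x j = vP j) := by
        intro j
        by_cases h : P j
        · obtain ⟨T, hT⟩ := hvP j h x hx
          exact ⟨T, fun t ht _ => hT t ht⟩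
        · exact ⟨0, fun t _ hp => absurd hp h⟩
      choose Tf hTf using hT
      refine ⟨(Finset.univ.sup Tf) + 1, ?_⟩
      intro t ht
      obtain ⟨t', rfl⟩ : ∃ t', t = t' + 1 := ⟨t - 1, by omega⟩
      rw [Function.iterate_succ_apply']
      have hy : memBox G ((ff G (eV G))^[t'] x) := iter_box_ff G _ hx t'
      have hyP : ∀ j, P j → (ff G (eV G))^[t'] x j = vP j := by
        intro j hp
        refine hTf j t' ?_ hp
        have := Finset.le_sup (f := Tf) (Finset.mem_univ j)
        omega
      rw [ff_not_head G _ _ hh]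
      unfold fPlain
      apply if_congr _ rfl rfl
      constructor
      · rintro ⟨j, harc, hact⟩
        by_cases hc2 : c2 G j
        · have hp : P j := ⟨harc, hc2⟩
          exact ⟨j, hp, by rw [← hyP j hp]; exact hact⟩
        · exact absurd hact (box_not_act_nonc2 G hl harc hc2 (hy j))
      · rintro ⟨j, hp, hact⟩
        exact ⟨j, hp.1, by rw [hyP j hp]; exact hact⟩

end Fwd
namespace Fwd
open SDigraph Finset Function

variable {n : ℕ}

lemma arc_indeg_pos (G : SDigraph (Fin n)) {j i : Fin n} (h : G.arc j i) :
    1 ≤ G.indeg i := by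
  unfold SDigraph.indeg
  rcases h with h | h
  · have : j ∈ Finset.univ.filter fun k => G.pos k i = true := by simp [h]
    have := Finset.card_pos.mpr ⟨j, this⟩; omega
  · have : j ∈ Finset.univ.filter fun k => G.neg k i = true := by simp [h]
    have := Finset.card_pos.mpr ⟨j, this⟩; omega

lemma no_isolated (G : SDigraph (Fin n)) (hconn : G.Connected)
    (hne : ∃ a b, G.arc a b) (i : Fin n) : 0 < G.outdeg i + G.indeg i := by
  obtain ⟨a, b, hab⟩ := hne
  have hpath := hconn a i
  induction hpath with
  | refl =>
    have := arc_outdeg_pos G hab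
    omega
  | @tail b' c hpath hstep ih =>
    rcases hstep with harc | harc
    · have := arc_indeg_pos G harc; omega
    · have := arc_outdeg_pos G harc; omega

lemma Xs_card (G : SDigraph (Fin n)) (j : Fin n) : (Xs G j).card = cc G j := by
  unfold Xs
  rw [Int.card_Icc]
  unfold top
  have := cc_ge_two G j
  omega

noncomputable def FF (G : SDigraph (Fin n)) : FDS (Fin n) where
  X := Xs G
  nonempty := fun i => ⟨0, by rw [mem_Xs]; exact ⟨le_refl 0, by linarith [top_ge_one G i]⟩⟩
  interval := fun i a ha b hb c hac hcb => by
    rw [mem_Xs] at ha hb ⊢; omega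
  f := ff G (eV G)
  maps := fun x hx i => by
    rcases ff_range G (eV G) x i with h | h <;> rw [h, mem_Xs]
    · exact ⟨le_refl 0, by linarith [top_ge_one G i]⟩
    · exact ⟨(scale_pos G i).le, scale_le_top G i⟩

theorem forward (G : SDigraph (Fin n)) (hconn : G.Connected)
    (hnc : ¬ G.IsSignedCycleGraph) (hne : ∃ a b, G.arc a b) :
    ∃ F : FDS (Fin n), F.onGraph G ∧ F.degreeBounded G ∧ F.Nilpotent := by
  classical
  refine ⟨FF G, ⟨fun j i => exact_pos G (eV G) (heB_eV G) j i,
    fun j i => exact_neg G (eV G) (heB_eV G) j i⟩, ?_, ?_⟩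
  · intro i
    constructor
    · rintro ⟨hout, hind⟩
      show (Xs G i).card = 2
      rw [Xs_card]
      unfold cc
      split_ifs with h1 h2
      · exact absurd h1.1 (by omega)
      · omega
      · rfl
    · intro hno
      show (Xs G i).card ≤ G.outdeg i + 1
      rw [Xs_card]
      unfold cc
      split_ifs with h1 h2
      · have := h1.1; omega
      · omega
      · rcases Nat.eq_zero_or_pos (G.outdeg i) with h0 | h0
        · exfalso
          have hiso := no_isolated G hconn hne i
          have hind : G.indeg i = 0 := by
            by_contra hi
            exact hno ⟨h0, by omega⟩
          omega
        · omega
  · have hstab := stabF G hconn hnc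
    set v : Fin n → ℤ := fun i => Classical.choose (hstab i) with hv
    have hvspec : ∀ i, ∀ x, memBox G x →
        ∃ T, ∀ t, T ≤ t → (ff G (eV G))^[t] x i = v i :=
      fun i => Classical.choose_spec (hstab i)
    set S : Finset (Fin n → ℤ) :=
      Fintype.piFinset (fun i => ({0, scale G i} : Finset ℤ)) with hS
    have hSmem : ∀ x, memBox G x → x ∈ S := by
      intro x hx
      rw [hS, Fintype.mem_piFinset]
      intro i
      rcases hx i with h | h <;> simp [h]
    set Tfun : (Fin n → ℤ) → ℕ := fun x =>
      if h : memBox G x then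
        Finset.univ.sup (fun i => Classical.choose (hvspec i x h)) else 0 with hTfun
    refine ⟨S.sup Tfun + 1, by omega, v, ?_⟩
    intro x hx
    rw [Function.iterate_succ_apply]
    have hbx : memBox G (ff G (eV G) x) := ff_memBox G _ x
    funext i
    apply Classical.choose_spec (hvspec i _ hbx)
    have hle1 : Classical.choose (hvspec i _ hbx) ≤
        Finset.univ.sup (fun k => Classical.choose (hvspec k (ff G (eV G) x) hbx)) :=
      Finset.le_sup (f := fun k => Classical.choose (hvspec k (ff G (eV G) x) hbx))
        (Finset.mem_univ i)
    have heq2 : Tfun (ff G (eV G) x) =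
        Finset.univ.sup (fun k => Classical.choose (hvspec k (ff G (eV G) x) hbx)) :=
      dif_pos hbx
    have hle3 : Tfun (ff G (eV G) x) ≤ S.sup Tfun := Finset.le_sup (hSmem _ hbx)
    omega

theorem forward_noarc (G : SDigraph (Fin n)) (hno : ∀ a b, ¬ G.arc a b) :
    ∃ F : FDS (Fin n), F.onGraph G ∧ F.degreeBounded G ∧ F.Nilpotent := by
  refine ⟨⟨fun _ => {0}, fun i => ⟨0, by simp⟩,
    fun i a ha b hb c hac hcb => by
      simp only [Finset.mem_singleton] at ha hb ⊢; omega,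
    fun _ _ => 0, fun x hx i => by simp⟩, ⟨?_, ?_⟩, ?_, ?_⟩
  · intro j i
    constructor
    · intro h; exact absurd (Or.inl h) (hno j i)
    · rintro ⟨x, hx, hx1, hlt⟩
      simp at hlt
  · intro j i
    constructor
    · intro h; exact absurd (Or.inr h) (hno j i)
    · rintro ⟨x, hx, hx1, hlt⟩
      simp at hlt
  · intro i
    have hp : ∀ a b, ¬ G.pos a b = true := fun a b h => hno a b (Or.inl h)
    have hn : ∀ a b, ¬ G.neg a b = true := fun a b h => hno a b (Or.inr h)
    have hout : G.outdeg i = 0 := by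
      unfold SDigraph.outdeg
      rw [Finset.filter_false_of_mem (fun k _ => hp i k),
        Finset.filter_false_of_mem (fun k _ => hn i k)]
      simp
    have hind : G.indeg i = 0 := by
      unfold SDigraph.indeg
      rw [Finset.filter_false_of_mem (fun k _ => hp k i),
        Finset.filter_false_of_mem (fun k _ => hn k i)]
      simp
    constructor
    · rintro ⟨_, hpos⟩
      rw [hind] at hpos
      omega
    · intro _
      simp [hout]
  · refine ⟨1, le_refl 1, fun _ => 0, ?_⟩
    intro x hx
    rfl

end Fwd

/-- For a connected signed digraph `G`, there exists a nilpotent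
degree-bounded system on `G` iff `G` is not a signed cycle. -/
theorem stmt1 (n : ℕ) (G : SDigraph (Fin n)) (hconn : SDigraph.Connected G) :
    (∃ F : FDS (Fin n), F.onGraph G ∧ F.degreeBounded G ∧ F.Nilpotent) ↔
      ¬ SDigraph.IsSignedCycleGraph G := by
  constructor
  · rintro ⟨F, hog, hdb, hnil⟩ hc
    exact Converse.cycle_not_nilpotent G hc F hog hdb hnil
  · intro hnc
    by_cases hne : ∃ a b, G.arc a b
    · exact Fwd.forward G hconn hnc hne
    · push_neg at hne
      exact Fwd.forward_noarc G hne
end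

section
/- If f:X→X is an FDS with n components whose interaction graph has no cycle, then f^n is a constant function; in particular f has a unique fixed point. -/
open scoped Classical

section Aux

variable {n : ℕ}

/-- If there is no arc j → i, a unit increase of coordinate j does not change f_i. -/
lemma noarc_step (F : FDS (Fin n)) (G : SDigraph (Fin n)) (hG : F.onGraph G)
    {j i : Fin n} (hji : ¬ G.arc j i)
    {x : Fin n → ℤ} (hx : F.mem x) (h1 : x j + 1 ∈ F.X j) :
    F.f (Function.update x j (x j + 1)) i = F.f x i := by
  rcases hG with ⟨hp, hn⟩
  have hpos : ¬ (G.pos j i = true) := fun h => hji (Or.inl h)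
  have hneg : ¬ (G.neg j i = true) := fun h => hji (Or.inr h)
  rw [hp j i] at hpos
  rw [hn j i] at hneg
  push_neg at hpos hneg
  have h1' := hpos x hx h1
  have h2' := hneg x hx h1
  omega

/-- mem is preserved by updating a coordinate to a value in its interval. -/
lemma mem_update (F : FDS (Fin n)) {x : Fin n → ℤ} (hx : F.mem x)
    {j : Fin n} {c : ℤ} (hc : c ∈ F.X j) : F.mem (Function.update x j c) := by
  intro l
  by_cases h : l = j
  · subst h; simpa using hc
  · simpa [Function.update_of_ne h] using hx l

/-- If no arc j → i, f_i does not depend on coordinate j at all. -/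
lemma noarc_update (F : FDS (Fin n)) (G : SDigraph (Fin n)) (hG : F.onGraph G)
    {j i : Fin n} (hji : ¬ G.arc j i)
    {x : Fin n → ℤ} (hx : F.mem x) {c : ℤ} (hc : c ∈ F.X j) :
    F.f (Function.update x j c) i = F.f x i := by
  -- upward direction
  have up : ∀ d : ℕ, ∀ c : ℤ, c = x j + d → c ∈ F.X j →
      F.f (Function.update x j c) i = F.f x i := by
    intro d
    induction d with
    | zero =>
      intro c hcd _
      have : c = x j := by omega
      subst this
      rw [Function.update_eq_self]
    | succ d ih =>
      intro c hcd hcX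
      have hmid : x j + d ∈ F.X j :=
        F.interval j (x j) (hx j) c hcX (x j + d) (by omega) (by omega)
      set y := Function.update x j (x j + (d : ℤ)) with hy
      have hym : F.mem y := mem_update F hx hmid
      have hyj : y j = x j + d := by simp [hy]
      have hy1 : y j + 1 ∈ F.X j := by rw [hyj]; convert hcX using 2; omega
      have hstep := noarc_step F G hG hji hym hy1
      have hupd : Function.update y j (y j + 1) = Function.update x j c := by
        simp only [hy, Function.update_self, Function.update_idem]
        have he : x j + (d : ℤ) + 1 = c := by omega
        rw [he]
      rw [hupd] at hstep
      rw [hstep]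
      exact ih _ rfl hmid
  -- downward direction
  have down : ∀ d : ℕ, ∀ c : ℤ, c = x j - d → c ∈ F.X j →
      F.f (Function.update x j c) i = F.f x i := by
    intro d
    induction d with
    | zero =>
      intro c hcd _
      have : c = x j := by omega
      subst this
      rw [Function.update_eq_self]
    | succ d ih =>
      intro c hcd hcX
      have hmid : x j - d ∈ F.X j :=
        F.interval j c hcX (x j) (hx j) (x j - d) (by omega) (by omega)
      set y := Function.update x j c with hy
      have hym : F.mem y := mem_update F hx hcX
      have hyj : y j = c := by simp [hy]
      have hy1 : y j + 1 ∈ F.X j := by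
        rw [hyj]
        have he : c + 1 = x j - (d : ℤ) := by omega
        rw [he]; exact hmid
      have hstep := noarc_step F G hG hji hym hy1
      have hupd : Function.update y j (y j + 1) = Function.update x j (x j - d) := by
        simp only [hy, Function.update_self, Function.update_idem]
        have he : c + 1 = x j - (d : ℤ) := by omega
        rw [he]
      rw [hupd] at hstep
      rw [← hstep]
      exact ih _ rfl hmid
  rcases le_or_gt (x j) c with h | h
  · exact up (c - x j).toNat c (by omega) hc
  · exact down (x j - c).toNat c (by omega) hc

/-- f_i depends only on coordinates j with an arc j → i. -/
lemma dep (F : FDS (Fin n)) (G : SDigraph (Fin n)) (hG : F.onGraph G)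
    {i : Fin n} {x y : Fin n → ℤ} (hx : F.mem x) (hy : F.mem y)
    (h : ∀ j, G.arc j i → x j = y j) : F.f x i = F.f y i := by
  have key : ∀ s : Finset (Fin n), ∀ x : Fin n → ℤ, F.mem x →
      (∀ j, j ∉ s → x j = y j) → (∀ j ∈ s, G.arc j i → x j = y j) →
      F.f x i = F.f y i := by
    intro s
    induction s using Finset.induction with
    | empty =>
      intro x hxm hout _
      have : x = y := funext fun j => hout j (Finset.notMem_empty j)
      rw [this]
    | @insert a t ha ih =>
      intro x hxm hout hin
      set x' := Function.update x a (y a) with hx'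
      have hx'm : F.mem x' := mem_update F hxm (hy a)
      have h1 : F.f x i = F.f x' i := by
        by_cases hxa : x a = y a
        · rw [hx', ← hxa, Function.update_eq_self]
        · have hna : ¬ G.arc a i := fun harc =>
            hxa (hin a (Finset.mem_insert_self a t) harc)
          exact (noarc_update F G hG hna hxm (hy a)).symm
      rw [h1]
      refine ih x' hx'm ?_ ?_
      · intro j hj
        by_cases hja : j = a
        · subst hja; simp [hx']
        · have : j ∉ insert a t := by simp [hja, hj]
          rw [hx', Function.update_of_ne hja]
          exact hout j this
      · intro j hj harc
        have hja : j ≠ a := fun h => ha (h ▸ hj)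
        rw [hx', Function.update_of_ne hja]
        exact hin j (Finset.mem_insert_of_mem hj) harc
  refine key Finset.univ x hx (fun j hj => absurd (Finset.mem_univ j) hj)
    (fun j _ => h j)

/-- f^[k] at coordinate i depends only on coordinates with a walk of length k to i. -/
lemma iter_dep (F : FDS (Fin n)) (G : SDigraph (Fin n)) (hG : F.onGraph G) :
    ∀ k : ℕ, ∀ i : Fin n, ∀ x y : Fin n → ℤ, F.mem x → F.mem y →
      (∀ j, G.steps k j i → x j = y j) → F.f^[k] x i = F.f^[k] y i := by
  intro k
  induction k with
  | zero => intro i x y _ _ h; exact h i rfl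
  | succ k ih =>
    intro i x y hx hy h
    rw [Function.iterate_succ_apply, Function.iterate_succ_apply]
    refine ih i (F.f x) (F.f y) (F.maps x hx) (F.maps y hy) ?_
    intro j hj
    refine dep F G hG hx hy ?_
    intro l hl
    exact h l ⟨j, hl, hj⟩

end Aux

section Acyclic

variable {n : ℕ}

/-- Convert `steps` to a walk function. -/
lemma steps_to_fun (G : SDigraph (Fin n)) :
    ∀ k : ℕ, ∀ a b : Fin n, G.steps k a b →
      ∃ w : ℕ → Fin n, w 0 = a ∧ w k = b ∧ ∀ t < k, G.arc (w t) (w (t + 1)) := by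
  intro k
  induction k with
  | zero =>
    intro a b h
    exact ⟨fun _ => a, rfl, h, fun t ht => absurd ht (Nat.not_lt_zero t)⟩
  | succ k ih =>
    intro a b h
    obtain ⟨c, hac, hcb⟩ := h
    obtain ⟨w', hw0, hwk, hwarc⟩ := ih c b hcb
    refine ⟨fun t => if t = 0 then a else w' (t - 1), by simp, by simp [hwk], ?_⟩
    intro t ht
    rcases Nat.eq_zero_or_pos t with h0 | h0
    · subst h0; simpa [hw0] using hac
    · have h1 : ¬ (t = 0) := by omega
      have h2 : ¬ (t + 1 = 0) := by omega
      simp only [h1, h2, if_false]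
      have h3 : t + 1 - 1 = (t - 1) + 1 := by omega
      rw [h3]
      exact hwarc (t - 1) (by omega)

/-- Shifting a walk with a repeated vertex gives a closed walk. -/
lemma shift_loop (G : SDigraph (Fin n)) (w : ℕ → Fin n) (N s t : ℕ)
    (hwarc : ∀ u < N, G.arc (w u) (w (u + 1))) (hst : s < t) (htN : t ≤ N)
    (heq : w s = w t) :
    1 ≤ t - s ∧ ∃ w' : ℕ → Fin n, w' (t - s) = w' 0 ∧
      ∀ u < t - s, G.arc (w' u) (w' (u + 1)) := by
  refine ⟨by omega, fun u => w (s + u), ?_, ?_⟩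
  · show w (s + (t - s)) = w (s + 0)
    have h1 : s + (t - s) = t := by omega
    have h2 : s + 0 = s := by omega
    rw [h1, h2]; exact heq.symm
  · intro u hu
    show G.arc (w (s + u)) (w (s + (u + 1)))
    have h1 : s + (u + 1) = (s + u) + 1 := by omega
    rw [h1]
    exact hwarc (s + u) (by omega)

/-- From a closed walk we get a genuine cycle. -/
lemma hasCycle_of_closed_walk (G : SDigraph (Fin n))
    (H : ∃ L : ℕ, 1 ≤ L ∧ ∃ w : ℕ → Fin n, w L = w 0 ∧
      ∀ t < L, G.arc (w t) (w (t + 1))) : G.HasCycle := by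
  classical
  set Q : ℕ → Prop := fun L => 1 ≤ L ∧ ∃ w : ℕ → Fin n, w L = w 0 ∧
      ∀ t < L, G.arc (w t) (w (t + 1)) with hQ
  have hex : ∃ L, Q L := H
  obtain ⟨hL1, w, hw0, hwarc⟩ := Nat.find_spec hex
  have hmin : ∀ M < Nat.find hex, ¬ Q M := fun M hM => Nat.find_min hex hM
  set L := Nat.find hex with hL
  -- w is injective on [0, L)
  have hinj : ∀ s t, s < t → t < L → w s ≠ w t := by
    intro s t hst htL heq
    exact hmin (t - s) (by omega)
      (shift_loop G w L s t (fun u hu => hwarc u hu) hst (by omega) heq)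
  obtain ⟨m, hm⟩ : ∃ m, L = m + 1 := ⟨L - 1, by omega⟩
  refine ⟨m, fun t => w t.val, ?_, ?_⟩
  · intro s t heq
    by_contra hne
    rcases Ne.lt_or_gt (fun h : s = t => hne h) with h | h
    · exact hinj s.val t.val (by exact_mod_cast h) (by omega) heq
    · exact hinj t.val s.val (by exact_mod_cast h) (by omega) heq.symm
  · intro t
    have htv : t.val < m + 1 := t.isLt
    show G.arc (w t.val) (w ((t + 1 : Fin (m + 1)).val))
    by_cases hlast : t.val = m
    · have h1 : ((t + 1 : Fin (m + 1)) : ℕ) = 0 := by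
        simp only [Fin.add_def, Fin.val_one']
        rcases Nat.eq_zero_or_pos m with h0 | h0
        · subst h0; simp
        · rw [Nat.mod_eq_of_lt (show 1 < m + 1 by omega), hlast, Nat.mod_self]
      rw [h1, ← hw0, hm]
      have h3 : w (m + 1) = w (t.val + 1) := by rw [hlast]
      rw [h3]
      exact hwarc t.val (by omega)
    · have h1 : ((t + 1 : Fin (m + 1)) : ℕ) = t.val + 1 := by
        simp only [Fin.add_def, Fin.val_one']
        have hm0 : 0 < m := by omega
        rw [Nat.mod_eq_of_lt (show 1 < m + 1 by omega), Nat.mod_eq_of_lt (by omega)]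
      rw [h1]
      exact hwarc t.val (by omega)

/-- In an acyclic graph there is no walk of length `n` (the number of vertices). -/
lemma no_long_walk (G : SDigraph (Fin n)) (hac : ¬ G.HasCycle) (i j : Fin n) :
    ¬ G.steps n j i := by
  intro hsteps
  obtain ⟨w, hw0, hwn, hwarc⟩ := steps_to_fun G n j i hsteps
  have hcard : Fintype.card (Fin n) < Fintype.card (Fin (n + 1)) := by simp
  obtain ⟨s, t, hst, heq⟩ :=
    Fintype.exists_ne_map_eq_of_card_lt (fun t : Fin (n + 1) => w t.val) hcard
  rcases Ne.lt_or_gt hst with h | h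
  · exact hac (hasCycle_of_closed_walk G ⟨t.val - s.val,
      shift_loop G w n s.val t.val hwarc (by exact_mod_cast h) (by omega) heq⟩)
  · exact hac (hasCycle_of_closed_walk G ⟨s.val - t.val,
      shift_loop G w n t.val s.val hwarc (by exact_mod_cast h) (by omega) heq.symm⟩)

end Acyclic

lemma mem_iter {n : ℕ} (F : FDS (Fin n)) : ∀ k : ℕ, ∀ x, F.mem x → F.mem (F.f^[k] x) := by
  intro k
  induction k with
  | zero => intro x hx; exact hx
  | succ k ih =>
    intro x hx
    rw [Function.iterate_succ_apply]
    exact ih (F.f x) (F.maps x hx)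


/-- If the interaction graph of an FDS with `n` components has no cycle,
then `f^n` is constant; in particular `f` has a unique fixed point. -/
theorem stmt2 (n : ℕ) (F : FDS (Fin n)) (G : SDigraph (Fin n)) (hG : F.onGraph G)
    (hac : ¬ SDigraph.HasCycle G) :
    (∃ c : Fin n → ℤ, ∀ x, F.mem x → F.f^[n] x = c) ∧
    (∃! x : Fin n → ℤ, F.IsFixed x) := by
  have hx0 : F.mem (fun i => (F.nonempty i).choose) := fun i => (F.nonempty i).choose_spec
  set x0 : Fin n → ℤ := fun i => (F.nonempty i).choose with hx0def
  set c : Fin n → ℤ := F.f^[n] x0 with hcdef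
  have hconst : ∀ x, F.mem x → F.f^[n] x = c := by
    intro x hx
    funext i
    exact iter_dep F G hG n i x x0 hx hx0
      (fun j hj => absurd hj (no_long_walk G hac i j))
  have hcmem : F.mem c := mem_iter F n x0 hx0
  have hcfix : F.f c = c := by
    have h1 : F.f (F.f^[n] x0) = F.f^[n] (F.f x0) :=
      (Function.iterate_succ_apply' F.f n x0).symm.trans
        (Function.iterate_succ_apply F.f n x0)
    rw [hcdef, h1]
    exact hconst (F.f x0) (F.maps x0 hx0)
  refine ⟨⟨c, hconst⟩, c, ⟨hcmem, hcfix⟩, ?_⟩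
  intro x ⟨hxm, hxf⟩
  rw [← hconst x hxm, Function.iterate_fixed hxf]
end
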